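/- arXiv:2001.03013 — 4 statements merged into one kernel-verified Lean document; each statement's English description precedes it below -/
import Mathlib

section
/- Let X₁,...,Xₙ be i.i.d. from an absolutely continuous distribution F with support contained in (0,1), and let U₁,...,Uₙ = F(X₁),...,F(Xₙ). Suppose that almost surely F(X₍ₙ₎/r) < F(X₍ₙ₎)/r and F(X₍₁₎) < r·F((X₍₁₎+r-1)/r) + 1 - r, where X₍₁₎, X₍ₙ₎ are the sample minimum and maximum. Then the domination number of the PICD built from X₁,...,Xₙ with parameters (r,c) is stochastically smaller than the domination number of the PICD built from U₁,...,Uₙ with parameters (r,F(c)). -/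
open Set MeasureTheory

/-- The parameterized proximity region on `(0,1)`. -/
noncomputable def N01 (r c x : ℝ) : Set ℝ :=
  if x < c then Set.Ioo 0 (min 1 (r * x)) else Set.Ioo (max 0 (1 - r * (1 - x))) 1

/-- The domination number of the digraph on vertices `X 0, …, X (n-1)` where `u` dominates
itself and every vertex lying in `N u`. -/
noncomputable def domNum (n : ℕ) (X : Fin n → ℝ) (N : ℝ → Set ℝ) : ℕ :=
  sInf {k | ∃ S : Finset (Fin n), S.card = k ∧
    ∀ j, ∃ i ∈ S, X j = X i ∨ X j ∈ N (X i)}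

lemma domNum_set_nonempty (n : ℕ) (X : Fin n → ℝ) (N : ℝ → Set ℝ) :
    Set.Nonempty {k | ∃ S : Finset (Fin n), S.card = k ∧
      ∀ j, ∃ i ∈ S, X j = X i ∨ X j ∈ N (X i)} :=
  ⟨n, Finset.univ, by simp, fun j => ⟨j, Finset.mem_univ j, Or.inl rfl⟩⟩

lemma domNum_mem (n : ℕ) (X : Fin n → ℝ) (N : ℝ → Set ℝ) :
    ∃ S : Finset (Fin n), S.card = domNum n X N ∧
      ∀ j, ∃ i ∈ S, X j = X i ∨ X j ∈ N (X i) :=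
  Nat.sInf_mem (domNum_set_nonempty n X N)

lemma one_le_domNum {n : ℕ} (hn : 1 ≤ n) (X : Fin n → ℝ) (N : ℝ → Set ℝ) :
    1 ≤ domNum n X N := by
  obtain ⟨S, hS, hcov⟩ := domNum_mem n X N
  rcases Nat.eq_zero_or_pos (domNum n X N) with h | h
  · exfalso
    rw [h, Finset.card_eq_zero] at hS
    obtain ⟨i, hi, -⟩ := hcov ⟨0, hn⟩
    simp [hS] at hi
  · exact h

lemma domNum_le_one {n : ℕ} (X : Fin n → ℝ) (N : ℝ → Set ℝ)
    (h : ∃ i, ∀ j, X j = X i ∨ X j ∈ N (X i)) : domNum n X N ≤ 1 := by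
  obtain ⟨i, hi⟩ := h
  exact Nat.sInf_le ⟨{i}, Finset.card_singleton i,
    fun j => ⟨i, Finset.mem_singleton_self i, hi j⟩⟩

lemma exists_witness_of_domNum_le_one {n : ℕ} (hn : 1 ≤ n) (X : Fin n → ℝ) (N : ℝ → Set ℝ)
    (h : domNum n X N ≤ 1) : ∃ i, ∀ j, X j = X i ∨ X j ∈ N (X i) := by
  have h1 : domNum n X N = 1 := le_antisymm h (one_le_domNum hn X N)
  obtain ⟨S, hS, hcov⟩ := domNum_mem n X N
  rw [h1, Finset.card_eq_one] at hS
  obtain ⟨i, rfl⟩ := hS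
  refine ⟨i, fun j => ?_⟩
  obtain ⟨i', hi', h'⟩ := hcov j
  rwa [Finset.mem_singleton.mp hi'] at h'

lemma domNum_le_two {n : ℕ} {r c : ℝ} (hr : 1 ≤ r) (X : Fin n → ℝ)
    (hX : ∀ i, X i ∈ Set.Ioo (0:ℝ) 1) : domNum n X (N01 r c) ≤ 2 := by
  classical
  set A : Finset (Fin n) := Finset.univ.filter (fun j => X j < c) with hA
  set B : Finset (Fin n) := Finset.univ.filter (fun j => ¬ X j < c) with hB
  have hmemA : ∀ j, j ∈ A ↔ X j < c := by intro j; simp [hA]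
  have hmemB : ∀ j, j ∈ B ↔ ¬ X j < c := by intro j; simp [hB]
  by_cases hAne : A.Nonempty
  · by_cases hBne : B.Nonempty
    · -- two witnesses
      obtain ⟨a, haA, hamax⟩ := Finset.exists_max_image A X hAne
      obtain ⟨b, hbB, hbmin⟩ := Finset.exists_min_image B X hBne
      have hac : X a < c := (hmemA a).mp haA
      have hbc : ¬ X b < c := (hmemB b).mp hbB
      have hab : a ≠ b := fun h => hbc (h ▸ hac)
      refine Nat.sInf_le ⟨{a, b}, Finset.card_pair hab, fun j => ?_⟩
      by_cases hj : X j < c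
      · refine ⟨a, by simp, ?_⟩
        rcases eq_or_lt_of_le (hamax j ((hmemA j).mpr hj)) with h | h
        · exact Or.inl h
        · refine Or.inr ?_
          rw [N01, if_pos hac]
          refine ⟨(hX j).1, lt_min (hX j).2 ?_⟩
          have h0a : (0:ℝ) < X a := (hX a).1
          nlinarith
      · refine ⟨b, by simp, ?_⟩
        rcases eq_or_lt_of_le (hbmin j ((hmemB j).mpr hj)) with h | h
        · exact Or.inl h.symm
        · refine Or.inr ?_
          rw [N01, if_neg hbc]
          refine ⟨max_lt (hX j).1 ?_, (hX j).2⟩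
          have hb1 : X b < 1 := (hX b).2
          nlinarith
    · -- all points < c : single witness argmax over univ
      have hall : ∀ j, X j < c := by
        intro j
        by_contra h
        exact hBne ⟨j, (hmemB j).mpr h⟩
      have hallA : A = Finset.univ := by
        ext j; simp [hA, hall j]
      obtain ⟨a, -, hamax⟩ := Finset.exists_max_image A X hAne
      refine le_trans (domNum_le_one X _ ⟨a, fun j => ?_⟩) (by norm_num)
      have hja : X j ≤ X a := hamax j (by rw [hallA]; exact Finset.mem_univ j)
      rcases eq_or_lt_of_le hja with h | h
      · exact Or.inl h
      · refine Or.inr ?_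
        rw [N01, if_pos (hall a)]
        refine ⟨(hX j).1, lt_min (hX j).2 ?_⟩
        have h0a : (0:ℝ) < X a := (hX a).1
        nlinarith
  · -- all points ≥ c : single witness argmin over univ
    have hall : ∀ j, ¬ X j < c := by
      intro j h
      exact hAne ⟨j, (hmemA j).mpr h⟩
    by_cases hBne : B.Nonempty
    · have hallB : B = Finset.univ := by
        ext j; simpa [hB] using hall j
      obtain ⟨b, -, hbmin⟩ := Finset.exists_min_image B X hBne
      refine le_trans (domNum_le_one X _ ⟨b, fun j => ?_⟩) (by norm_num)
      have hjb : X b ≤ X j := hbmin j (by rw [hallB]; exact Finset.mem_univ j)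
      rcases eq_or_lt_of_le hjb with h | h
      · exact Or.inl h.symm
      · refine Or.inr ?_
        rw [N01, if_neg (hall b)]
        refine ⟨max_lt (hX j).1 ?_, (hX j).2⟩
        have hb1 : X b < 1 := (hX b).2
        nlinarith
    · -- n = 0
      have : ¬ Nonempty (Fin n) := by
        intro ⟨j⟩
        rcases lt_or_ge (X j) c with h | h
        · exact hAne ⟨j, (hmemA j).mpr h⟩
        · exact hBne ⟨j, (hmemB j).mpr (not_lt.mpr h)⟩
      refine le_trans (Nat.sInf_le ⟨∅, Finset.card_empty, fun j => absurd ⟨j⟩ this⟩) ?_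
      norm_num

lemma transfer {n : ℕ} (hn : 1 ≤ n) {r c : ℝ} (hr : 1 ≤ r) (F : ℝ → ℝ)
    (hmono : Monotone F) (hF0 : ∀ x, 0 ≤ F x) (hF1 : ∀ x, F x ≤ 1)
    (X : Fin n → ℝ) (hX : ∀ i, X i ∈ Set.Ioo (0:ℝ) 1)
    (hmax : F ((⨆ i, X i) / r) < F (⨆ i, X i) / r)
    (hmin : F (⨅ i, X i) < r * F (((⨅ i, X i) + r - 1) / r) + 1 - r)
    (hedge : ∀ i, F (X i) = F c → c ≤ X i)
    (i : Fin n) (hdom : ∀ j, F (X j) = F (X i) ∨ F (X j) ∈ N01 r (F c) (F (X i))) :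
    ∀ j, X j = X i ∨ X j ∈ N01 r c (X i) := by
  haveI : Nonempty (Fin n) := Fin.pos_iff_nonempty.mp hn
  have hr0 : (0:ℝ) < r := lt_of_lt_of_le one_pos hr
  set M := ⨆ i, X i with hM
  set m := ⨅ i, X i with hm
  obtain ⟨k, hk⟩ : ∃ k, X k = M := exists_eq_ciSup_of_finite
  obtain ⟨k', hk'⟩ : ∃ k', X k' = m := exists_eq_ciInf_of_finite
  have hleM : ∀ j, X j ≤ M := fun j => le_ciSup (Set.Finite.bddAbove (Set.finite_range X)) j
  have hlem : ∀ j, m ≤ X j := fun j => ciInf_le (Set.Finite.bddBelow (Set.finite_range X)) j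
  by_cases hu : F (X i) < F c
  · -- dominating point on the left of c
    have hFM : F M ≤ r * F (X i) := by
      rcases hdom k with h | h
      · rw [hk] at h
        rw [h]
        nlinarith [hF0 (X i)]
      · rw [N01, if_pos hu] at h
        rw [hk] at h
        exact le_trans h.2.le (min_le_right _ _)
    have hlt : F (M / r) < F (X i) := lt_of_lt_of_le hmax (by
      rw [div_le_iff₀ hr0] at *
      linarith [hFM])
    have hMr : M / r < X i := by
      by_contra h
      exact absurd (hmono (not_lt.mp h)) (not_le.mpr hlt)
    have hMlt : M < r * X i := by
      rw [div_lt_iff₀ hr0] at hMr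
      linarith
    have hic : X i < c := by
      by_contra h
      exact absurd (hmono (not_lt.mp h)) (not_le.mpr hu)
    intro j
    refine Or.inr ?_
    rw [N01, if_pos hic]
    exact ⟨(hX j).1, lt_min (hX j).2 (lt_of_le_of_lt (hleM j) hMlt)⟩
  · -- dominating point on the right of c
    have hci : c ≤ X i := by
      by_contra h
      push_neg at h
      have h1 : F (X i) ≤ F c := hmono h.le
      have h2 : F (X i) = F c := le_antisymm h1 (not_lt.mp hu)
      exact absurd (hedge i h2) (not_le.mpr h)
    have hFm : 1 - r + r * F (X i) ≤ F m := by
      rcases hdom k' with h | h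
      · rw [hk'] at h
        rw [h]
        nlinarith [hF1 (X i)]
      · rw [N01, if_neg hu] at h
        rw [hk'] at h
        have := lt_of_le_of_lt (le_max_right 0 (1 - r * (1 - F (X i)))) h.1
        linarith
    have hlt : F (X i) < F ((m + r - 1) / r) := by
      have h1 : r * F (X i) < r * F ((m + r - 1) / r) := by linarith
      exact lt_of_mul_lt_mul_left h1 hr0.le
    have hir : X i < (m + r - 1) / r := by
      by_contra h
      exact absurd (hmono (not_lt.mp h)) (not_le.mpr hlt)
    have hmlt : 1 - r * (1 - X i) < m := by
      rw [lt_div_iff₀ hr0] at hir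
      nlinarith
    intro j
    refine Or.inr ?_
    rw [N01, if_neg (not_lt.mpr hci)]
    exact ⟨max_lt (hX j).1 (lt_of_lt_of_le hmlt (hlem j)), (hX j).2⟩

lemma level_null (μ : Measure ℝ) [IsProbabilityMeasure μ] (hac : μ ≪ volume) (c : ℝ) :
    μ {x | x < c ∧ (μ (Set.Iic x)).toReal = (μ (Set.Iic c)).toReal} = 0 := by
  set S := {x | x < c ∧ (μ (Set.Iic x)).toReal = (μ (Set.Iic c)).toReal} with hSdef
  have hatom : ∀ a : ℝ, μ {a} = 0 := fun a => hac Real.volume_singleton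
  have key : ∀ x ∈ S, μ (Set.Ioc x c) = 0 := by
    rintro x ⟨hxc, hx⟩
    have hfin : μ (Set.Iic x) ≠ ⊤ := measure_ne_top μ _
    have heq : μ (Set.Iic x) = μ (Set.Iic c) :=
      (ENNReal.toReal_eq_toReal_iff' hfin (measure_ne_top μ _)).mp hx
    have hsplit : μ (Set.Iic x) + μ (Set.Ioc x c) = μ (Set.Iic x) := by
      rw [← measure_union (Set.Iic_disjoint_Ioc le_rfl) measurableSet_Ioc,
        Set.Iic_union_Ioc_eq_Iic hxc.le, heq]
    exact (ENNReal.add_right_inj hfin).mp (by rw [hsplit, add_zero])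
  by_cases hne : S.Nonempty
  · by_cases hbdd : BddBelow S
    · set a := sInf S with ha
      have hsel : ∀ k : ℕ, ∃ x ∈ S, x < a + 1/(k+1) := fun k =>
        Real.lt_sInf_add_pos hne (by positivity)
      choose x hxS hxlt using hsel
      have hcover : S ⊆ {a} ∪ ⋃ k : ℕ, Set.Ioc (x k) c := by
        intro y hy
        rcases eq_or_lt_of_le (csInf_le hbdd hy) with h | h
        · exact Or.inl h.symm
        · obtain ⟨k, hk⟩ := exists_nat_one_div_lt (sub_pos.mpr h)
          refine Or.inr (Set.mem_iUnion.mpr ⟨k, ?_, hy.1.le⟩)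
          have := hxlt k
          linarith
      exact measure_mono_null hcover
        (measure_union_null (hatom a) (measure_iUnion_null fun k => key _ (hxS k)))
    · rw [not_bddBelow_iff] at hbdd
      have hsel : ∀ k : ℕ, ∃ y ∈ S, y < -(k:ℝ) := fun k => hbdd _
      choose x hxS hxlt using hsel
      have hcover : S ⊆ ⋃ k : ℕ, Set.Ioc (x k) c := by
        intro y hy
        obtain ⟨k, hk⟩ := exists_nat_gt (-y)
        refine Set.mem_iUnion.mpr ⟨k, ?_, hy.1.le⟩
        have := hxlt k
        linarith
      exact measure_mono_null hcover (measure_iUnion_null fun k => key _ (hxS k))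
  · rw [Set.not_nonempty_iff_eq_empty] at hne
    rw [hne]
    exact measure_empty

/-- Stochastic ordering: Let `X₁,…,Xₙ` be i.i.d. from an absolutely
continuous `μ` supported in `(0,1)` with cdf `F`, and `Uᵢ = F(Xᵢ)`.  If almost surely
`F(X₍ₙ₎/r) < F(X₍ₙ₎)/r` and `F(X₍₁₎) < r·F((X₍₁₎+r-1)/r) + 1 - r`, then the domination
number of the PICD of the `X`-sample with parameters `(r,c)` is stochastically smaller than
that of the `U`-sample with parameters `(r,F(c))`. -/
theorem picd_domNum_stochastic_order (μ : Measure ℝ) [IsProbabilityMeasure μ]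
    (hac : μ ≪ volume) (hsupp : μ (Set.Ioo 0 1) = 1)
    (r c : ℝ) (hr : 1 ≤ r) (hc : c ∈ Set.Ioo (0:ℝ) 1) (n : ℕ) (hn : 1 ≤ n)
    (F : ℝ → ℝ) (hF : F = fun x => (μ (Set.Iic x)).toReal)
    (has : ∀ᵐ X : Fin n → ℝ ∂(Measure.pi fun _ => μ),
      F ((⨆ i, X i) / r) < F (⨆ i, X i) / r ∧
      F (⨅ i, X i) < r * F (((⨅ i, X i) + r - 1) / r) + 1 - r) :
    ∀ t : ℕ,
      (Measure.pi fun _ : Fin n => μ) {X | t < domNum n X (N01 r c)} ≤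
        (Measure.pi fun _ : Fin n => μ)
          {X | t < domNum n (fun i => F (X i)) (N01 r (F c))} := by
  intro t
  set π := (Measure.pi fun _ : Fin n => μ) with hπ
  -- basic properties of F
  have hmono : Monotone F := by
    rw [hF]
    intro a b hab
    exact ENNReal.toReal_mono (measure_ne_top μ _)
      (measure_mono (Set.Iic_subset_Iic.mpr hab))
  have hF0 : ∀ x, 0 ≤ F x := by rw [hF]; intro x; exact ENNReal.toReal_nonneg
  have hF1 : ∀ x, F x ≤ 1 := by
    rw [hF]; intro x
    simpa using ENNReal.toReal_mono ENNReal.one_ne_top (prob_le_one (μ := μ) (s := Set.Iic x))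
  -- null events
  have hE1 : π {X : Fin n → ℝ | ¬ (F ((⨆ i, X i) / r) < F (⨆ i, X i) / r ∧
      F (⨅ i, X i) < r * F (((⨅ i, X i) + r - 1) / r) + 1 - r)} = 0 := ae_iff.mp has
  have hE2 : π {X : Fin n → ℝ | ¬ ∀ i, X i ∈ Set.Ioo (0:ℝ) 1} = 0 := by
    have hB : μ (Set.Ioo (0:ℝ) 1)ᶜ = 0 := by
      have h := measure_compl (μ := μ) (s := Set.Ioo (0:ℝ) 1) measurableSet_Ioo (measure_ne_top μ _)
      rw [hsupp, measure_univ] at h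
      simpa using h
    refine measure_mono_null ?_ (measure_iUnion_null (fun i : Fin n =>
      Measure.pi_eval_preimage_null (fun _ : Fin n => μ) (i := i) hB))
    intro X hX
    obtain ⟨i, hi⟩ := not_forall.mp hX
    exact Set.mem_iUnion.mpr ⟨i, hi⟩
  have hE3 : π {X : Fin n → ℝ | ¬ ∀ i, F (X i) = F c → c ≤ X i} = 0 := by
    have hB : μ {x : ℝ | x < c ∧ F x = F c} = 0 := by
      rw [hF]; exact level_null μ hac c
    refine measure_mono_null ?_ (measure_iUnion_null (fun i : Fin n =>
      Measure.pi_eval_preimage_null (fun _ : Fin n => μ) (i := i) hB))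
    intro X hX
    obtain ⟨i, hi⟩ := not_forall.mp hX
    push_neg at hi
    exact Set.mem_iUnion.mpr ⟨i, hi.2, hi.1⟩
  rcases Nat.lt_or_ge t 1 with ht | ht
  · -- t = 0 : the right-hand set is everything
    have huniv : {X : Fin n → ℝ | t < domNum n (fun i => F (X i)) (N01 r (F c))} =
        Set.univ := by
      refine Set.eq_univ_of_forall (fun X => ?_)
      have := one_le_domNum hn (fun i => F (X i)) (N01 r (F c))
      exact lt_of_lt_of_le ht this
    rw [huniv]
    exact measure_mono (Set.subset_univ _)
  rcases Nat.lt_or_ge t 2 with ht2 | ht2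
  · -- t = 1 : the substantive case
    set E : Set (Fin n → ℝ) := {X | (F ((⨆ i, X i) / r) < F (⨆ i, X i) / r ∧
        F (⨅ i, X i) < r * F (((⨅ i, X i) + r - 1) / r) + 1 - r) ∧
        (∀ i, X i ∈ Set.Ioo (0:ℝ) 1) ∧ (∀ i, F (X i) = F c → c ≤ X i)} with hE
    have hEc : π Eᶜ = 0 := by
      refine measure_mono_null ?_
        (measure_union_null hE1 (measure_union_null hE2 hE3))
      intro X hX
      simp only [hE, Set.mem_compl_iff, Set.mem_setOf_eq, Set.mem_union] at *
      tauto
    have hsub : {X : Fin n → ℝ | t < domNum n X (N01 r c)} ∩ E ⊆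
        {X | t < domNum n (fun i => F (X i)) (N01 r (F c))} := by
      rintro X ⟨hA, hcond, hpts, hedge⟩
      simp only [Set.mem_setOf_eq] at hA ⊢
      by_contra h
      have hU : domNum n (fun i => F (X i)) (N01 r (F c)) ≤ 1 := by omega
      obtain ⟨i, hi⟩ := exists_witness_of_domNum_le_one hn _ _ hU
      have hXw := transfer hn hr F hmono hF0 hF1 X hpts hcond.1 hcond.2 hedge i hi
      have := domNum_le_one X (N01 r c) ⟨i, hXw⟩
      omega
    calc π {X : Fin n → ℝ | t < domNum n X (N01 r c)}
        ≤ π ({X : Fin n → ℝ | t < domNum n X (N01 r c)} ∩ E) +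
          π ({X : Fin n → ℝ | t < domNum n X (N01 r c)} \ E) :=
          measure_le_inter_add_diff _ _ _
      _ ≤ π {X | t < domNum n (fun i => F (X i)) (N01 r (F c))} + 0 := by
          exact add_le_add (measure_mono hsub)
            (le_trans (measure_mono (fun x hx => hx.2)) (le_of_eq hEc))
      _ = _ := add_zero _
  · -- t ≥ 2 : the left-hand set is null
    have h0 : π {X : Fin n → ℝ | t < domNum n X (N01 r c)} = 0 := by
      refine measure_mono_null ?_ hE2
      intro X hX
      simp only [Set.mem_setOf_eq] at *
      intro hall
      have := domNum_le_two (c := c) hr X hall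
      omega
    rw [h0]
    exact zero_le
end

section
/- Let F have density f(x) = (π/2)|sin(2πx)| on (0,1), and c ∈ (0,1/2). Then for the PICD with parameters r = 1/(1-c) and centrality c built from n i.i.d. F points, lim_{n→∞} P(γₙ = 2) = 0; that is, the domination number converges in probability to 1. -/
open Set MeasureTheory Filter Topology Real

open scoped ENNReal

noncomputable def picdDens : ℝ → ℝ≥0∞ := fun x =>
  ENNReal.ofReal (if x ∈ Set.Ioo (0:ℝ) 1 then (π/2) * |Real.sin (2*π*x)| else 0)

noncomputable def picdMeas : Measure ℝ := volume.withDensity picdDens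

lemma picdDens_eq_indicator :
    picdDens = (Set.Ioo (0:ℝ) 1).indicator (fun x => ENNReal.ofReal ((π/2) * |Real.sin (2*π*x)|)) := by
  funext x
  by_cases h : x ∈ Set.Ioo (0:ℝ) 1 <;> simp [picdDens, h]

lemma picdMeas_apply {s : Set ℝ} (hs : MeasurableSet s) :
    picdMeas s = ∫⁻ x in s ∩ Set.Ioo (0:ℝ) 1, ENNReal.ofReal ((π/2) * |Real.sin (2*π*x)|) := by
  rw [picdMeas, withDensity_apply _ hs, picdDens_eq_indicator,
    setLIntegral_indicator measurableSet_Ioo, Set.inter_comm]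

lemma picd_cont : Continuous (fun x : ℝ => (π/2) * |Real.sin (2*π*x)|) := by
  continuity

lemma picd_integral_half1 : ∫ x in (0:ℝ)..(1/2:ℝ), (π/2) * |Real.sin (2*π*x)| = 1/2 := by
  have hcong : ∀ x ∈ uIcc (0:ℝ) (1/2:ℝ), (π/2) * |Real.sin (2*π*x)| = (π/2) * Real.sin (2*π*x) := by
    intro x hx
    rw [uIcc_of_le (by norm_num : (0:ℝ) ≤ 1/2)] at hx
    rw [abs_of_nonneg (Real.sin_nonneg_of_nonneg_of_le_pi (by nlinarith [pi_pos, hx.1]) (by nlinarith [pi_pos, hx.2]))]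
  rw [intervalIntegral.integral_congr hcong, intervalIntegral.integral_const_mul,
    intervalIntegral.integral_comp_mul_left (fun u => Real.sin u) (by positivity : (2:ℝ)*π ≠ 0)]
  rw [integral_sin]
  norm_num [Real.cos_pi]
  field_simp
  rw [Real.cos_pi]; ring

lemma picd_integral_half2 : ∫ x in (1/2:ℝ)..(1:ℝ), (π/2) * |Real.sin (2*π*x)| = 1/2 := by
  have hcong : ∀ x ∈ uIcc (1/2:ℝ) (1:ℝ), (π/2) * |Real.sin (2*π*x)| = (π/2) * (-Real.sin (2*π*x)) := by
    intro x hx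
    rw [uIcc_of_le (by norm_num : (1/2:ℝ) ≤ 1)] at hx
    have h1 : Real.sin (2*π*x) ≤ 0 := by
      rw [← Real.sin_sub_two_pi]
      exact Real.sin_nonpos_of_nonpos_of_neg_pi_le (by nlinarith [pi_pos, hx.2]) (by nlinarith [pi_pos, hx.1])
    rw [abs_of_nonpos h1]
  rw [intervalIntegral.integral_congr hcong, intervalIntegral.integral_const_mul,
    intervalIntegral.integral_neg,
    intervalIntegral.integral_comp_mul_left (fun u => Real.sin u) (by positivity : (2:ℝ)*π ≠ 0)]
  rw [integral_sin]
  norm_num [Real.cos_pi, Real.cos_two_pi]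
  field_simp
  rw [Real.cos_pi]; ring

lemma picd_setIntegral : ∫ x in Set.Ioo (0:ℝ) 1, (π/2) * |Real.sin (2*π*x)| = 1 := by
  rw [← integral_Ioc_eq_integral_Ioo, ← intervalIntegral.integral_of_le (by norm_num : (0:ℝ) ≤ 1)]
  rw [← intervalIntegral.integral_add_adjacent_intervals
    (picd_cont.intervalIntegrable (0:ℝ) (1/2:ℝ)) (picd_cont.intervalIntegrable (1/2:ℝ) (1:ℝ))]
  rw [picd_integral_half1, picd_integral_half2]; norm_num

lemma picdMeas_univ : picdMeas Set.univ = 1 := by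
  rw [picdMeas_apply MeasurableSet.univ, Set.univ_inter]
  rw [← ofReal_integral_eq_lintegral_ofReal
    ((picd_cont.integrableOn_Icc).mono_set Set.Ioo_subset_Icc_self)
    (ae_of_all _ (fun x => by positivity))]
  rw [picd_setIntegral]; simp

noncomputable instance : IsProbabilityMeasure picdMeas := ⟨picdMeas_univ⟩

lemma picdMeas_small {ε : ℝ} (hε : 0 < ε) :
    picdMeas (Set.Ioo ε 1)ᶜ ≤ ENNReal.ofReal (π^2 * ε^2) := by
  rw [picdMeas_apply measurableSet_Ioo.compl]
  have hsub : (Set.Ioo ε 1)ᶜ ∩ Set.Ioo (0:ℝ) 1 ⊆ Set.Ioc (0:ℝ) ε := by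
    intro x ⟨hx1, hx2⟩
    simp only [Set.mem_compl_iff, Set.mem_Ioo, not_and_or, not_lt] at hx1
    rcases hx1 with h | h
    · exact ⟨hx2.1, h⟩
    · exact absurd hx2.2 (not_lt.2 h)
  refine le_trans (lintegral_mono_set hsub) ?_
  have hbound : ∀ x ∈ Set.Ioc (0:ℝ) ε,
      ENNReal.ofReal ((π/2) * |Real.sin (2*π*x)|) ≤ ENNReal.ofReal (π^2 * ε) := by
    intro x hx
    apply ENNReal.ofReal_le_ofReal
    have h1 : |Real.sin (2*π*x)| ≤ |2*π*x| := Real.abs_sin_le_abs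
    have h2 : |2*π*x| = 2*π*x := abs_of_nonneg (by nlinarith [pi_pos, hx.1])
    nlinarith [pi_pos, hx.1, hx.2]
  calc ∫⁻ x in Set.Ioc (0:ℝ) ε, ENNReal.ofReal ((π/2) * |Real.sin (2*π*x)|)
      ≤ ∫⁻ _x in Set.Ioc (0:ℝ) ε, ENNReal.ofReal (π^2 * ε) :=
        setLIntegral_mono measurable_const hbound
    _ = ENNReal.ofReal (π^2 * ε) * ENNReal.ofReal ε := by
        rw [setLIntegral_const, Real.volume_Ioc]; norm_num
    _ = ENNReal.ofReal (π^2 * ε^2) := by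
        rw [← ENNReal.ofReal_mul (by positivity)]; ring_nf

lemma picd_sin_lb {a b x : ℝ} (ha : 0 < a) (hb : b < 1/2) (hx1 : a ≤ x) (hx2 : x ≤ b) :
    min (Real.sin (2*π*a)) (Real.sin (2*π*b)) ≤ Real.sin (2*π*x) := by
  have hπ := pi_pos
  have hab : a ≤ b := le_trans hx1 hx2
  have hmem : 2*π*x ∈ segment ℝ (2*π*a) (2*π*b) := by
    rw [segment_eq_Icc (by nlinarith)]
    constructor <;> nlinarith
  exact strictConcaveOn_sin_Icc.concaveOn.ge_on_segment
    ⟨by positivity, by nlinarith⟩ ⟨by nlinarith, by nlinarith⟩ hmem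

lemma picd_delta_pos {c : ℝ} (hc0 : 0 < c) (hc2 : c < 1/2) :
    0 < min (Real.sin (2*π*c)) (Real.sin (2*π*(c/2+1/4))) := by
  have hπ := pi_pos
  apply lt_min
  · exact Real.sin_pos_of_pos_of_lt_pi (by positivity) (by nlinarith)
  · exact Real.sin_pos_of_pos_of_lt_pi (by positivity) (by nlinarith)

lemma picdMeas_mid {c ε : ℝ} (hc0 : 0 < c) (hc2 : c < 1/2) (hε : 0 < ε)
    (hb : c + (1-c)*ε ≤ c/2 + 1/4) :
    ENNReal.ofReal ((π/2) * min (Real.sin (2*π*c)) (Real.sin (2*π*(c/2+1/4))) * ((1-c)*ε))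
      ≤ picdMeas (Set.Ioc c (c + (1-c)*ε)) := by
  have hπ := pi_pos
  have hδpos : 0 < min (Real.sin (2*π*c)) (Real.sin (2*π*(c/2+1/4))) := picd_delta_pos hc0 hc2
  have hIsub : Set.Ioc c (c + (1-c)*ε) ⊆ Set.Ioo (0:ℝ) 1 := by
    intro x hx
    exact ⟨lt_trans hc0 hx.1, by linarith [hx.2, hb]⟩
  rw [picdMeas_apply measurableSet_Ioc, Set.inter_eq_left.2 hIsub]
  calc ENNReal.ofReal ((π/2) * min (Real.sin (2*π*c)) (Real.sin (2*π*(c/2+1/4))) * ((1-c)*ε))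
      = ENNReal.ofReal ((π/2) * min (Real.sin (2*π*c)) (Real.sin (2*π*(c/2+1/4))))
          * ENNReal.ofReal ((1-c)*ε) := by
        rw [← ENNReal.ofReal_mul (by positivity)]
    _ = ∫⁻ _x in Set.Ioc c (c + (1-c)*ε),
          ENNReal.ofReal ((π/2) * min (Real.sin (2*π*c)) (Real.sin (2*π*(c/2+1/4)))) := by
        rw [setLIntegral_const, Real.volume_Ioc,
          show c + (1-c)*ε - c = (1-c)*ε from by ring]
    _ ≤ ∫⁻ x in Set.Ioc c (c + (1-c)*ε), ENNReal.ofReal ((π/2) * |Real.sin (2*π*x)|) := by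
        apply setLIntegral_mono (Measurable.ennreal_ofReal picd_cont.measurable)
        intro x hx
        apply ENNReal.ofReal_le_ofReal
        have h1 := picd_sin_lb (a := c) (b := c/2+1/4) hc0 (by linarith) hx.1.le
          (le_trans hx.2 hb)
        have h2 : Real.sin (2*π*x) ≤ |Real.sin (2*π*x)| := le_abs_self _
        nlinarith

lemma domNum_eq_one {c ε : ℝ} (hc0 : 0 < c) (hc2 : c < 1/2) (hε : 0 < ε)
    {n : ℕ} {X : Fin n → ℝ} (hG : ∀ j, X j ∈ Set.Ioo ε 1)
    (hI : ∃ i, X i ∈ Set.Ioc c (c + (1-c)*ε)) :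
    domNum n X (N01 (1/(1-c)) c) = 1 := by
  obtain ⟨i, hi⟩ := hI
  have h1c : (0:ℝ) < 1 - c := by linarith
  have hone : 1 ∈ {k | ∃ S : Finset (Fin n), S.card = k ∧
      ∀ j, ∃ i' ∈ S, X j = X i' ∨ X j ∈ N01 (1/(1-c)) c (X i')} := by
    refine ⟨{i}, Finset.card_singleton i, fun j => ⟨i, Finset.mem_singleton_self i, Or.inr ?_⟩⟩
    have hnotlt : ¬ (X i < c) := not_lt.2 hi.1.le
    rw [N01, if_neg hnotlt]
    have ht : 1 - (1/(1-c)) * (1 - X i) ≤ ε := by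
      rw [one_div]
      have h2 : (1-c)*(1-ε) ≤ 1 - X i := by nlinarith [hi.2]
      have h3 : 1 - ε ≤ (1-c)⁻¹ * (1 - X i) := by
        rw [← div_eq_inv_mul, le_div_iff₀ h1c]; linarith
      linarith
    refine ⟨?_, (hG j).2⟩
    exact max_lt (lt_trans hε (hG j).1) (lt_of_le_of_lt ht (hG j).1)
  have hle : domNum n X (N01 (1/(1-c)) c) ≤ 1 := by
    rw [domNum]; exact Nat.sInf_le hone
  have hne : domNum n X (N01 (1/(1-c)) c) ≠ 0 := by
    rw [domNum, Ne, Nat.sInf_eq_zero]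
    rintro (⟨S, hS, hdom⟩ | hemp)
    · obtain ⟨i', hi', -⟩ := hdom i
      rw [Finset.card_eq_zero] at hS
      simp [hS] at hi'
    · exact (hemp ▸ hone : (1:ℕ) ∈ (∅ : Set ℕ))
  omega

lemma prod_bad_le {μ : Measure ℝ} [IsProbabilityMeasure μ] {n : ℕ} {G I : Set ℝ} :
    Measure.pi (fun _ : Fin n => μ)
      ((⋃ j, Function.eval j ⁻¹' Gᶜ) ∪ Set.univ.pi (fun _ => Iᶜ))
      ≤ n * μ Gᶜ + (μ Iᶜ)^n := by
  refine le_trans (measure_union_le _ _) (add_le_add ?_ ?_)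
  · refine le_trans (measure_iUnion_le _) ?_
    have hkey : ∀ j : Fin n,
        Measure.pi (fun _ : Fin n => μ) (Function.eval j ⁻¹' Gᶜ) = μ Gᶜ := by
      intro j
      have hset : Function.eval j ⁻¹' Gᶜ
          = Set.univ.pi (fun i => if i = j then Gᶜ else Set.univ) := by
        ext X
        simp only [Set.mem_preimage, Set.mem_pi, Set.mem_univ, true_implies]
        constructor
        · intro h i
          by_cases hij : i = j <;> simp [hij, h]
        · intro h
          have := h j
          simpa using this
      rw [hset, Measure.pi_pi]
      simp [apply_ite μ]
    refine le_of_eq ?_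
    calc ∑' j : Fin n, Measure.pi (fun _ : Fin n => μ) (Function.eval j ⁻¹' Gᶜ)
        = ∑' _j : Fin n, μ Gᶜ := by simp_rw [hkey]
      _ = n * μ Gᶜ := by
          rw [tsum_fintype]; simp [Finset.card_univ]
  · rw [Measure.pi_pi]
    simp [Finset.prod_const, Finset.card_univ]

set_option maxHeartbeats 2000000 in
/-- For the distribution with density `f(x) = (π/2)|sin(2πx)|` on `(0,1)` and
`c ∈ (0,1/2)`, the PICD with parameters `(1/(1-c), c)` satisfies `limₙ P(γₙ = 2) = 0`;
that is, the domination number converges in probability to `1`. -/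
theorem picd_domNum_limit_sine_density (c : ℝ) (hc : c ∈ Set.Ioo (0:ℝ) (1/2)) :
    Tendsto
      (fun n =>
        ((Measure.pi fun _ : Fin n =>
            volume.withDensity fun x =>
              ENNReal.ofReal
                (if x ∈ Set.Ioo (0:ℝ) 1 then (π/2) * |Real.sin (2*π*x)| else 0))
          {X | domNum n X (N01 (1/(1-c)) c) = 2}).toReal)
      atTop (𝓝 0) ∧
    Tendsto
      (fun n =>
        ((Measure.pi fun _ : Fin n =>
            volume.withDensity fun x =>
              ENNReal.ofReal
                (if x ∈ Set.Ioo (0:ℝ) 1 then (π/2) * |Real.sin (2*π*x)| else 0))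
          {X | domNum n X (N01 (1/(1-c)) c) = 1}).toReal)
      atTop (𝓝 1) := by
  obtain ⟨hc0, hc2⟩ := hc
  have hMeq : (volume.withDensity fun x =>
      ENNReal.ofReal (if x ∈ Set.Ioo (0:ℝ) 1 then (π/2) * |Real.sin (2*π*x)| else 0))
      = picdMeas := rfl
  simp only [hMeq]
  have h1c : (0:ℝ) < 1 - c := by linarith
  have hπ := pi_pos
  set δ : ℝ := min (Real.sin (2*π*c)) (Real.sin (2*π*(c/2+1/4))) with hδdef
  have hδpos : 0 < δ := picd_delta_pos hc0 hc2
  set K : ℝ := (π/2) * δ * (1-c) with hKdef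
  have hK : 0 < K := by positivity
  set ε : ℕ → ℝ := fun n => (n:ℝ) ^ (-(3/4 : ℝ)) with hεdef
  have hεto : Tendsto ε atTop (𝓝 0) :=
    (tendsto_rpow_neg_atTop (by norm_num : (0:ℝ) < 3/4)).comp tendsto_natCast_atTop_atTop
  set bnd : ℕ → ℝ := fun n =>
    (n:ℝ) * (π^2 * (ε n)^2) + Real.exp (-(K * (n:ℝ) ^ ((1/4):ℝ))) with hbnddef
  -- bnd tends to 0
  have hbnd0 : Tendsto bnd atTop (𝓝 0) := by
    have hterm1 : Tendsto (fun n : ℕ => (n:ℝ) * (π^2 * (ε n)^2)) atTop (𝓝 0) := by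
      have heq : ∀ᶠ n : ℕ in atTop,
          π^2 * (n:ℝ) ^ (-(1/2):ℝ) = (n:ℝ) * (π^2 * (ε n)^2) := by
        filter_upwards [eventually_ge_atTop 1] with n hn
        have hnp : (0:ℝ) < (n:ℝ) := by exact_mod_cast hn
        have h1 : (ε n)^2 = (n:ℝ) ^ (-(3/2):ℝ) := by
          rw [hεdef, ← Real.rpow_natCast ((n:ℝ) ^ (-(3/4):ℝ)) 2,
            ← Real.rpow_mul hnp.le]
          norm_num
        rw [h1, show (n:ℝ) * (π^2 * (n:ℝ) ^ (-(3/2):ℝ))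
            = π^2 * ((n:ℝ)^(1:ℝ) * (n:ℝ) ^ (-(3/2):ℝ)) from by rw [Real.rpow_one]; ring,
          ← Real.rpow_add hnp]
        norm_num
      have hlim : Tendsto (fun n : ℕ => π^2 * (n:ℝ) ^ (-(1/2):ℝ)) atTop (𝓝 0) := by
        have := ((tendsto_rpow_neg_atTop (by norm_num : (0:ℝ) < 1/2)).comp
          tendsto_natCast_atTop_atTop).const_mul (π^2)
        simpa using this
      exact hlim.congr' heq
    have hterm2 : Tendsto (fun n : ℕ => Real.exp (-(K * (n:ℝ) ^ ((1/4):ℝ)))) atTop (𝓝 0) := by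
      apply Real.tendsto_exp_neg_atTop_nhds_zero.comp
      exact Tendsto.const_mul_atTop hK
        ((tendsto_rpow_atTop (by norm_num : (0:ℝ) < 1/4)).comp tendsto_natCast_atTop_atTop)
    have h := hterm1.add hterm2
    simp only [add_zero] at h
    exact h
  -- eventual bounds
  have hev : ∀ᶠ n : ℕ in atTop,
      ((Measure.pi fun _ : Fin n => picdMeas)
        {X | domNum n X (N01 (1/(1-c)) c) = 2}).toReal ≤ bnd n ∧
      1 - bnd n ≤ ((Measure.pi fun _ : Fin n => picdMeas)
        {X | domNum n X (N01 (1/(1-c)) c) = 1}).toReal := by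
    have hε₀ : (0:ℝ) < (1/4 - c/2)/(1-c) := by
      apply div_pos (by linarith) h1c
    filter_upwards [eventually_ge_atTop 1,
      hεto.eventually (gt_mem_nhds hε₀),
      hεto.eventually (gt_mem_nhds (inv_pos.2 hK))] with n hn1 hE1 hE2
    have hnp : (0:ℝ) < (n:ℝ) := by exact_mod_cast hn1
    have he : 0 < ε n := Real.rpow_pos_of_pos hnp _
    have hb : c + (1-c)*(ε n) ≤ c/2 + 1/4 := by
      nlinarith [(lt_div_iff₀ h1c).1 hE1]
    have hKe1 : K * ε n ≤ 1 := by
      have h := mul_lt_mul_of_pos_left hE2 hK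
      rw [mul_inv_cancel₀ hK.ne'] at h
      linarith
    set G : Set ℝ := Set.Ioo (ε n) 1 with hGdef
    set I : Set ℝ := Set.Ioc c (c + (1-c)*(ε n)) with hIdef
    set Bad : Set (Fin n → ℝ) :=
      (⋃ j, Function.eval j ⁻¹' Gᶜ) ∪ Set.univ.pi (fun _ => Iᶜ) with hBaddef
    have hBadmeas : MeasurableSet Bad := by
      apply MeasurableSet.union
      · exact MeasurableSet.iUnion fun j =>
          (measurableSet_Ioo.compl).preimage (measurable_pi_apply j)
      · exact MeasurableSet.univ_pi fun _ => measurableSet_Ioc.compl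
    have hGood : Badᶜ ⊆ {X | domNum n X (N01 (1/(1-c)) c) = 1} := by
      intro X hX
      rw [hBaddef, Set.compl_union] at hX
      obtain ⟨hX1, hX2⟩ := hX
      have hGall : ∀ j, X j ∈ G := by
        intro j
        have := Set.notMem_of_mem_compl hX1
        simp only [Set.mem_iUnion, not_exists, Set.mem_preimage] at this
        have hj := this j
        simpa using hj
      have hIex : ∃ i, X i ∈ I := by
        have := Set.notMem_of_mem_compl hX2
        simp only [Set.mem_pi, Set.mem_univ, true_implies, Set.mem_compl_iff, not_forall,
          not_not] at this
        exact this
      exact domNum_eq_one hc0 hc2 he hGall hIex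
    have hsub2 : {X : Fin n → ℝ | domNum n X (N01 (1/(1-c)) c) = 2} ⊆ Bad := by
      intro X hX
      by_contra hXB
      have := hGood hXB
      simp only [Set.mem_setOf_eq] at this hX
      omega
    -- measure bound
    have hIc : picdMeas Iᶜ ≤ 1 - ENNReal.ofReal (K * ε n) := by
      rw [prob_compl_eq_one_sub measurableSet_Ioc]
      apply tsub_le_tsub_left
      rw [show K * ε n = (π/2) * δ * ((1-c)*(ε n)) from by rw [hKdef]; ring]
      exact picdMeas_mid hc0 hc2 he hb
    have hchain : (Measure.pi fun _ : Fin n => picdMeas) Bad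
        ≤ ENNReal.ofReal ((n:ℝ) * (π^2 * (ε n)^2) + (1 - K * ε n)^n) := by
      refine le_trans prod_bad_le ?_
      have h1 : (n : ℝ≥0∞) * picdMeas Gᶜ ≤ ENNReal.ofReal ((n:ℝ) * (π^2 * (ε n)^2)) := by
        rw [ENNReal.ofReal_mul (by positivity : (0:ℝ) ≤ (n:ℝ)), ENNReal.ofReal_natCast]
        exact mul_le_mul_of_nonneg_left (picdMeas_small he) (zero_le')
      have h2 : (picdMeas Iᶜ)^n ≤ ENNReal.ofReal ((1 - K * ε n)^n) := by
        rw [ENNReal.ofReal_pow (by linarith)]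
        apply pow_le_pow_left'
        refine le_trans hIc ?_
        rw [← ENNReal.ofReal_one, ← ENNReal.ofReal_sub _ (by positivity)]
      refine le_trans (add_le_add h1 h2) ?_
      rw [← ENNReal.ofReal_add (by positivity) (pow_nonneg (by linarith) n)]
    have hrb : ((Measure.pi fun _ : Fin n => picdMeas) Bad).toReal
        ≤ (n:ℝ) * (π^2 * (ε n)^2) + (1 - K * ε n)^n := by
      exact ENNReal.toReal_le_of_le_ofReal
        (add_nonneg (by positivity) (pow_nonneg (by linarith) n)) hchain
    have hfinal : ((Measure.pi fun _ : Fin n => picdMeas) Bad).toReal ≤ bnd n := by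
      refine le_trans hrb (add_le_add le_rfl ?_)
      have hstep1 : (1 - K * ε n) ≤ Real.exp (-(K * ε n)) := by
        have := Real.add_one_le_exp (-(K * ε n))
        linarith
      have hstep2 : (1 - K * ε n)^n ≤ Real.exp (-(K * ε n))^n :=
        pow_le_pow_left₀ (by linarith) hstep1 n
      have hne : (n:ℝ) * ε n = (n:ℝ) ^ ((1/4):ℝ) := by
        rw [hεdef, show ((n:ℝ)) * (n:ℝ) ^ (-(3/4:ℝ))
            = (n:ℝ)^(1:ℝ) * (n:ℝ) ^ (-(3/4):ℝ) from by rw [Real.rpow_one],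
          ← Real.rpow_add hnp]
        norm_num
      calc (1 - K * ε n)^n ≤ Real.exp (-(K * ε n))^n := hstep2
        _ = Real.exp ((n:ℝ) * -(K * ε n)) := (Real.exp_nat_mul _ n).symm
        _ = Real.exp (-(K * (n:ℝ) ^ ((1/4):ℝ))) := by rw [← hne]; ring_nf
    constructor
    · refine le_trans (ENNReal.toReal_mono (measure_ne_top _ _) (measure_mono hsub2)) hfinal
    · have hgc : (Measure.pi fun _ : Fin n => picdMeas) Badᶜ
          = 1 - (Measure.pi fun _ : Fin n => picdMeas) Bad :=
        prob_compl_eq_one_sub hBadmeas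
      have h1 : 1 - bnd n ≤ ((Measure.pi fun _ : Fin n => picdMeas) Badᶜ).toReal := by
        rw [hgc, ENNReal.toReal_sub_of_le prob_le_one ENNReal.one_ne_top, ENNReal.toReal_one]
        linarith
      refine le_trans h1 (ENNReal.toReal_mono (measure_ne_top _ _) (measure_mono hGood))
  constructor
  · apply squeeze_zero' (Eventually.of_forall fun n => ENNReal.toReal_nonneg)
      (hev.mono fun n hn => hn.1) hbnd0
  · refine tendsto_of_tendsto_of_tendsto_of_le_of_le'
      (g := fun n : ℕ => 1 - bnd n) (h := fun _ : ℕ => (1:ℝ)) ?_ tendsto_const_nhds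
      (hev.mono fun n hn => hn.2) ?_
    · simpa using (tendsto_const_nhds (x := (1:ℝ))).sub hbnd0
    · refine Eventually.of_forall fun n => ?_
      have := ENNReal.toReal_mono (a := (Measure.pi fun _ : Fin n => picdMeas)
        {X | domNum n X (N01 (1/(1-c)) c) = 1}) (b := 1) ENNReal.one_ne_top prob_le_one
      simpa using this
end

section
/- Let Y₁ < Y₂ < ... < Yₘ partition ℝ into intervals I₀ = (-∞,Y₁), Iᵢ = (Yᵢ,Yᵢ₊₁) for 1 ≤ i ≤ m-1, and Iₘ = (Yₘ,∞), and let X₁,...,Xₙ be points avoiding {Y₁,...,Yₘ}. Let nᵢ = |{X : X ∈ Iᵢ}|, k₁ = #{1 ≤ i ≤ m-1 : nᵢ > 1}, k₂ = #{1 ≤ i ≤ m-1 : nᵢ = 1}, k₃ = #{i ∈ {0,m} : nᵢ > 0}. Then for any r ≥ 1, c ∈ [0,1], the domination number γ of the PICD satisfies max(k₃, 1(n>0)) ≤ γ ≤ 2k₁ + k₂ + k₃ ≤ min(n, 2m). -/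
open Set
open scoped Classical

/-- The parameterized proximity region for the intervalization of `ℝ` by the points
`Y 0 < Y 1 < … < Y (m-1)`: for `x` strictly between two consecutive `Y` values the region is
the parameterized proximity region inside that interval with relative center `c`; for `x`
in an end interval it is `(Y₍₁₎ - r(Y₍₁₎ - x), Y₍₁₎)` resp. `(Y₍ₘ₎, Y₍ₘ₎ + r(x - Y₍ₘ₎))`;
and `N(y) = {y}` for `y` among the `Y` values. -/
noncomputable def NM {m : ℕ} (Y : Fin m → ℝ) (r c x : ℝ) : Set ℝ :=
  if x ∈ Set.range Y then {x}
  else if hB : (Finset.univ.filter fun i => Y i < x).Nonempty then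
    (let l := (Finset.univ.filter fun i => Y i < x).sup' hB Y
     if hA : (Finset.univ.filter fun i => x < Y i).Nonempty then
       let u := (Finset.univ.filter fun i => x < Y i).inf' hA Y
       if x < l + c * (u - l) then Set.Ioo l (min u (l + r * (x - l)))
       else Set.Ioo (max l (u - r * (u - x))) u
     else Set.Ioo l (l + r * (x - l)))
  else if hA : (Finset.univ.filter fun i => x < Y i).Nonempty then
    let u := (Finset.univ.filter fun i => x < Y i).inf' hA Y
    Set.Ioo (u - r * (u - x)) u
  else ∅

lemma fin_le_castSucc_iff' {m : ℕ} {i : Fin m} {j : Fin (m+1)} :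
    j ≤ i.castSucc ↔ j < i.succ := by
  simp only [Fin.le_iff_val_le_val, Fin.lt_iff_val_lt_val, Fin.coe_castSucc, Fin.val_succ]
  omega

variable {m : ℕ} {Y : Fin (m+1) → ℝ} {r c x : ℝ}

lemma NM_left (hY : StrictMono Y) (hx : x < Y 0) :
    NM Y r c x = Ioo (Y 0 - r * (Y 0 - x)) (Y 0) := by
  have hnr : x ∉ Set.range Y := by
    rintro ⟨j, rfl⟩
    exact absurd hx (not_lt.2 (hY.monotone (Fin.zero_le j)))
  have hB : ¬ (Finset.univ.filter fun i => Y i < x).Nonempty := by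
    rintro ⟨i, hi⟩
    simp only [Finset.mem_filter] at hi
    exact absurd (hi.2.trans hx) (not_lt.2 (hY.monotone (Fin.zero_le i)))
  have hA : (Finset.univ.filter fun i => x < Y i).Nonempty :=
    ⟨0, by simp [hx]⟩
  have hinf : (Finset.univ.filter fun i => x < Y i).inf' hA Y = Y 0 := by
    apply le_antisymm
    · exact Finset.inf'_le _ (by simp [hx])
    · exact Finset.le_inf' _ _ fun i _ => hY.monotone (Fin.zero_le i)
  rw [NM, if_neg hnr, dif_neg hB, dif_pos hA, hinf]

lemma NM_right (hY : StrictMono Y) (hx : Y (Fin.last m) < x) :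
    NM Y r c x = Ioo (Y (Fin.last m)) (Y (Fin.last m) + r * (x - Y (Fin.last m))) := by
  have hnr : x ∉ Set.range Y := by
    rintro ⟨j, rfl⟩
    exact absurd hx (not_lt.2 (hY.monotone (Fin.le_last j)))
  have hA : ¬ (Finset.univ.filter fun i => x < Y i).Nonempty := by
    rintro ⟨i, hi⟩
    simp only [Finset.mem_filter] at hi
    exact absurd (hx.trans hi.2) (not_lt.2 (hY.monotone (Fin.le_last i)))
  have hB : (Finset.univ.filter fun i => Y i < x).Nonempty :=
    ⟨Fin.last m, by simp [hx]⟩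
  have hsup : (Finset.univ.filter fun i => Y i < x).sup' hB Y = Y (Fin.last m) := by
    apply le_antisymm
    · exact Finset.sup'_le _ _ fun i _ => hY.monotone (Fin.le_last i)
    · exact Finset.le_sup' _ (by simp [hx])
  rw [NM, if_neg hnr, dif_pos hB, dif_neg hA]
  simp only [hsup]

lemma NM_mid (hY : StrictMono Y) (i : Fin m) (hx : x ∈ Ioo (Y i.castSucc) (Y i.succ)) :
    NM Y r c x =
      if x < Y i.castSucc + c * (Y i.succ - Y i.castSucc) then
        Ioo (Y i.castSucc) (min (Y i.succ) (Y i.castSucc + r * (x - Y i.castSucc)))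
      else Ioo (max (Y i.castSucc) (Y i.succ - r * (Y i.succ - x))) (Y i.succ) := by
  obtain ⟨hx1, hx2⟩ := hx
  have hnr : x ∉ Set.range Y := by
    rintro ⟨j, rfl⟩
    rcases lt_or_ge j i.succ with h | h
    · exact absurd hx1 (not_lt.2 (hY.monotone (fin_le_castSucc_iff'.2 h)))
    · exact absurd hx2 (not_lt.2 (hY.monotone h))
  have hB : (Finset.univ.filter fun j => Y j < x).Nonempty := ⟨i.castSucc, by simp [hx1]⟩
  have hA : (Finset.univ.filter fun j => x < Y j).Nonempty := ⟨i.succ, by simp [hx2]⟩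
  have hsup : (Finset.univ.filter fun j => Y j < x).sup' hB Y = Y i.castSucc := by
    apply le_antisymm
    · refine Finset.sup'_le _ _ fun j hj => ?_
      simp only [Finset.mem_filter] at hj
      have : j ≤ i.castSucc := by
        rw [fin_le_castSucc_iff']
        by_contra h
        exact absurd (hj.2.trans hx2) (not_lt.2 (hY.monotone (not_lt.1 h)))
      exact hY.monotone this
    · exact Finset.le_sup' _ (by simp [hx1])
  have hinf : (Finset.univ.filter fun j => x < Y j).inf' hA Y = Y i.succ := by
    apply le_antisymm
    · exact Finset.inf'_le _ (by simp [hx2])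
    · refine Finset.le_inf' _ _ fun j hj => ?_
      simp only [Finset.mem_filter] at hj
      have : i.succ ≤ j := by
        by_contra h
        exact absurd (hx1.trans hj.2)
          (not_lt.2 (hY.monotone (fin_le_castSucc_iff'.2 (not_le.1 h))))
      exact hY.monotone this
  rw [NM, if_neg hnr, dif_pos hB, dif_pos hA]
  simp only [hsup, hinf]

lemma NM_mid_subset (hY : StrictMono Y) (i : Fin m)
    (hx : x ∈ Ioo (Y i.castSucc) (Y i.succ)) :
    NM Y r c x ⊆ Ioo (Y i.castSucc) (Y i.succ) := by
  rw [NM_mid hY i hx]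
  split_ifs
  · exact fun z hz => ⟨hz.1, lt_of_lt_of_le hz.2 (min_le_left _ _)⟩
  · exact fun z hz => ⟨lt_of_le_of_lt (le_max_left _ _) hz.1, hz.2⟩

lemma loc_trichotomy (hY : StrictMono Y) (hnr : x ∉ Set.range Y) :
    x < Y 0 ∨ Y (Fin.last m) < x ∨ ∃ i : Fin m, x ∈ Ioo (Y i.castSucc) (Y i.succ) := by
  by_cases h0 : x < Y 0
  · exact Or.inl h0
  by_cases hl : Y (Fin.last m) < x
  · exact Or.inr (Or.inl hl)
  refine Or.inr (Or.inr ?_)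
  have h0' : Y 0 < x := lt_of_le_of_ne (not_lt.1 h0) fun h => hnr ⟨0, h⟩
  have hl' : x < Y (Fin.last m) := lt_of_le_of_ne (not_lt.1 hl) fun h => hnr ⟨Fin.last m, h.symm⟩
  have hB : (Finset.univ.filter fun j => Y j < x).Nonempty := ⟨0, by simp [h0']⟩
  set T := Finset.univ.filter fun j : Fin (m+1) => Y j < x with hT
  obtain ⟨j₀, hj₀T, hj₀max⟩ := T.exists_max_image id hB
  simp only [hT, Finset.mem_filter] at hj₀T
  have hj₀ne : j₀ ≠ Fin.last m := by
    rintro rfl; exact absurd hl' (not_lt.2 hj₀T.2.le)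
  have hj₀lt : (j₀ : ℕ) < m := by
    have := Fin.val_lt_last hj₀ne; omega
  refine ⟨⟨(j₀ : ℕ), hj₀lt⟩, ?_, ?_⟩
  · have : Fin.castSucc ⟨(j₀ : ℕ), hj₀lt⟩ = j₀ := by
      ext; simp
    rw [this]; exact hj₀T.2
  · set js : Fin (m+1) := Fin.succ ⟨(j₀ : ℕ), hj₀lt⟩ with hjs
    have hne : Y js ≠ x := fun h => hnr ⟨js, h⟩
    rcases lt_or_ge x (Y js) with h | h
    · exact h
    have hmem : js ∈ T := by
      simp only [hT, Finset.mem_filter]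
      exact ⟨Finset.mem_univ _, lt_of_le_of_ne h hne⟩
    have := hj₀max js hmem
    simp only [id] at this
    have : (js : ℕ) ≤ (j₀ : ℕ) := this
    simp [hjs, Fin.val_succ] at this

lemma argmin_subsingleton {α β : Type*} [LinearOrder β] {F : Finset α} {g : α → β}
    (hg : Function.Injective g) (a b : α)
    (ha : a ∈ F ∧ ∀ k ∈ F, g a ≤ g k) (hb : b ∈ F ∧ ∀ k ∈ F, g b ≤ g k) : a = b :=
  hg (le_antisymm (ha.2 b hb.1) (hb.2 a ha.1))

lemma argmax_subsingleton {α β : Type*} [LinearOrder β] {F : Finset α} {g : α → β}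
    (hg : Function.Injective g) (a b : α)
    (ha : a ∈ F ∧ ∀ k ∈ F, g k ≤ g a) (hb : b ∈ F ∧ ∀ k ∈ F, g k ≤ g b) : a = b :=
  hg (le_antisymm (hb.2 a ha.1) (ha.2 b hb.1))

lemma argmin_exists {α β : Type*} [LinearOrder β] (F : Finset α) (g : α → β)
    (hF : F.Nonempty) : ∃ j ∈ F, ∀ k ∈ F, g j ≤ g k :=
  F.exists_min_image g hF

lemma argmax_exists {α β : Type*} [LinearOrder β] (F : Finset α) (g : α → β)
    (hF : F.Nonempty) : ∃ j ∈ F, ∀ k ∈ F, g k ≤ g j :=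
  F.exists_max_image g hF

/-- Bounds on the domination number of the multiple-interval PICD.  Here the
`m+1` points `Y 0 < … < Y m` (so `m+1 ≥ 1` points, `m` middle intervals) intervalize `ℝ`,
the `X` points avoid the `Y` values, and with `k₁, k₂` the numbers of middle intervals
containing more than one resp. exactly one `X` point and `k₃` the number of nonempty end
intervals, `max(k₃, 1(n>0)) ≤ γ ≤ 2k₁ + k₂ + k₃ ≤ min(n, 2(m+1))`. -/
theorem picd_domNum_multi_bounds (m n : ℕ) (Y : Fin (m+1) → ℝ) (hY : StrictMono Y)
    (X : Fin n → ℝ) (hXY : ∀ i j, X i ≠ Y j) (r c : ℝ) (hr : 1 ≤ r)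
    (hc : c ∈ Set.Icc (0:ℝ) 1) :
    let cnt : Fin m → ℕ := fun i =>
      (Finset.univ.filter fun j =>
        X j ∈ Set.Ioo (Y i.castSucc) (Y i.succ)).card
    let k₁ := (Finset.univ.filter fun i : Fin m => 1 < cnt i).card
    let k₂ := (Finset.univ.filter fun i : Fin m => cnt i = 1).card
    let n₀ := (Finset.univ.filter fun j => X j < Y 0).card
    let nm := (Finset.univ.filter fun j => Y (Fin.last m) < X j).card
    let k₃ := (if 0 < n₀ then 1 else 0) + (if 0 < nm then 1 else 0)
    let γ := domNum n X (NM Y r c)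
    max k₃ (if 0 < n then 1 else 0) ≤ γ ∧
      γ ≤ 2 * k₁ + k₂ + k₃ ∧ 2 * k₁ + k₂ + k₃ ≤ min n (2 * (m + 1)) := by
  intro cnt k₁ k₂ n₀ nm k₃ γ
  obtain ⟨hc0, hc1⟩ := hc
  have hYmono := hY.monotone
  classical
  -- basic definitions
  set g : Fin n → ℝ ×ₗ Fin n := fun j => toLex (X j, j) with hgdef
  have hg_inj : Function.Injective g := by
    intro a b hab
    have h := toLex_inj.1 hab
    exact (Prod.ext_iff.1 h).2
  have hg_le : ∀ a b : Fin n, g a ≤ g b → X a = X b ∨ X a < X b := by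
    intro a b h
    rcases Prod.Lex.le_iff.1 h with h | h
    · exact Or.inr h
    · exact Or.inl h.1
  set Fl : Finset (Fin n) := Finset.univ.filter (fun j => X j < Y 0) with hFl
  set Fr : Finset (Fin n) := Finset.univ.filter (fun j => Y (Fin.last m) < X j) with hFr
  set M : Fin m → ℝ := fun i => Y i.castSucc + c * (Y i.succ - Y i.castSucc) with hM
  set T : Fin m → Finset (Fin n) :=
    fun i => Finset.univ.filter (fun j => X j ∈ Ioo (Y i.castSucc) (Y i.succ)) with hT
  have hn₀ : n₀ = Fl.card := rfl
  have hnm : nm = Fr.card := rfl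
  have hcnt : ∀ i, cnt i = (T i).card := fun i => rfl
  have hk₃ : k₃ = (if 0 < n₀ then 1 else 0) + (if 0 < nm then 1 else 0) := rfl
  set FA : Fin m → Finset (Fin n) :=
    fun i => Finset.univ.filter (fun j => j ∈ T i ∧ X j < M i) with hFA
  set FB : Fin m → Finset (Fin n) :=
    fun i => Finset.univ.filter (fun j => j ∈ T i ∧ M i ≤ X j) with hFB
  set SL : Finset (Fin n) :=
    Finset.univ.filter (fun j => j ∈ Fl ∧ ∀ k ∈ Fl, g j ≤ g k) with hSL
  set SR : Finset (Fin n) :=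
    Finset.univ.filter (fun j => j ∈ Fr ∧ ∀ k ∈ Fr, g k ≤ g j) with hSR
  set SA : Fin m → Finset (Fin n) :=
    fun i => Finset.univ.filter (fun j => j ∈ FA i ∧ ∀ k ∈ FA i, g k ≤ g j) with hSA
  set SB : Fin m → Finset (Fin n) :=
    fun i => Finset.univ.filter (fun j => j ∈ FB i ∧ ∀ k ∈ FB i, g j ≤ g k) with hSB
  set S : Finset (Fin n) :=
    SL ∪ SR ∪ Finset.univ.biUnion (fun i => SA i ∪ SB i) with hS
  -- the domination set predicate
  have hDn : n ∈ {k | ∃ S : Finset (Fin n), S.card = k ∧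
      ∀ j, ∃ i ∈ S, X j = X i ∨ X j ∈ NM Y r c (X i)} :=
    ⟨Finset.univ, by simp, fun j => ⟨j, Finset.mem_univ j, Or.inl rfl⟩⟩
  have hγdef : γ = sInf {k | ∃ S : Finset (Fin n), S.card = k ∧
      ∀ j, ∃ i ∈ S, X j = X i ∨ X j ∈ NM Y r c (X i)} := rfl
  have hγmem : γ ∈ {k | ∃ S : Finset (Fin n), S.card = k ∧
      ∀ j, ∃ i ∈ S, X j = X i ∨ X j ∈ NM Y r c (X i)} := by
    rw [hγdef]; exact Nat.sInf_mem ⟨n, hDn⟩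
  obtain ⟨S₀, hS₀card, hS₀dom⟩ := hγmem
  -- not in range
  have hnr : ∀ j : Fin n, X j ∉ Set.range Y := by
    rintro j ⟨t, ht⟩; exact hXY j t ht.symm
  -- lower bound helpers
  have keyL : 0 < n₀ → ∃ i ∈ S₀, X i < Y 0 := by
    intro h0
    rw [hn₀] at h0
    obtain ⟨j, hj⟩ := Finset.card_pos.1 h0
    rw [hFl, Finset.mem_filter] at hj
    obtain ⟨i, hiS, hi⟩ := hS₀dom j
    refine ⟨i, hiS, ?_⟩
    rcases hi with h | h
    · rw [← h]; exact hj.2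
    · rcases loc_trichotomy hY (hnr i) with h0' | hl' | ⟨i', hi'⟩
      · exact h0'
      · rw [NM_right hY hl'] at h
        exact absurd hj.2 (not_lt.2 (le_trans (hYmono (Fin.zero_le _)) h.1.le))
      · have hmem := NM_mid_subset hY i' hi' h
        exact absurd hj.2 (not_lt.2 (le_trans (hYmono (Fin.zero_le _)) hmem.1.le))
  have keyR : 0 < nm → ∃ i ∈ S₀, Y (Fin.last m) < X i := by
    intro h0
    rw [hnm] at h0
    obtain ⟨j, hj⟩ := Finset.card_pos.1 h0
    rw [hFr, Finset.mem_filter] at hj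
    obtain ⟨i, hiS, hi⟩ := hS₀dom j
    refine ⟨i, hiS, ?_⟩
    rcases hi with h | h
    · rw [← h]; exact hj.2
    · rcases loc_trichotomy hY (hnr i) with h0' | hl' | ⟨i', hi'⟩
      · rw [NM_left hY h0'] at h
        exact absurd hj.2 (not_lt.2 (le_trans h.2.le (hYmono (Fin.zero_le _))))
      · exact hl'
      · have hmem := NM_mid_subset hY i' hi' h
        exact absurd hj.2 (not_lt.2 (le_trans hmem.2.le (hYmono (Fin.le_last _))))
  -- lower bound
  have hlow : max k₃ (if 0 < n then 1 else 0) ≤ γ := by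
    rw [← hS₀card]
    refine max_le ?_ ?_
    · rw [hk₃]
      by_cases h0 : 0 < n₀ <;> by_cases hm : 0 < nm
      · obtain ⟨iL, hiLS, hiL⟩ := keyL h0
        obtain ⟨iR, hiRS, hiR⟩ := keyR hm
        have hne : iL ≠ iR := by
          intro h; rw [h] at hiL
          exact absurd hiL (not_lt.2 (le_trans (hYmono (Fin.zero_le _)) hiR.le))
        have := Finset.one_lt_card.2 ⟨iL, hiLS, iR, hiRS, hne⟩
        simp only [h0, hm, if_true]
        omega
      · obtain ⟨iL, hiLS, _⟩ := keyL h0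
        have := Finset.card_pos.2 ⟨iL, hiLS⟩
        simp only [h0, hm, if_true, if_false]
        omega
      · obtain ⟨iR, hiRS, _⟩ := keyR hm
        have := Finset.card_pos.2 ⟨iR, hiRS⟩
        simp only [h0, hm, if_true, if_false]
        omega
      · simp [h0, hm]
    · by_cases hn : 0 < n
      · obtain ⟨i, hiS, _⟩ := hS₀dom ⟨0, hn⟩
        have := Finset.card_pos.2 ⟨i, hiS⟩
        simpa [hn] using this
      · simp [hn]
  -- domination by S
  have hdom : ∀ j, ∃ i ∈ S, X j = X i ∨ X j ∈ NM Y r c (X i) := by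
    intro j
    rcases loc_trichotomy hY (hnr j) with hj0 | hjl | ⟨i, hji⟩
    · have hjFl : j ∈ Fl := by rw [hFl, Finset.mem_filter]; exact ⟨Finset.mem_univ _, hj0⟩
      obtain ⟨a, haF, hamin⟩ := argmin_exists Fl g ⟨j, hjFl⟩
      have haS : a ∈ SL := by
        rw [hSL]; exact Finset.mem_filter.2 ⟨Finset.mem_univ _, haF, hamin⟩
      refine ⟨a, ?_, ?_⟩
      · rw [hS]
        exact Finset.mem_union_left _ (Finset.mem_union_left _ haS)
      · have haY : X a < Y 0 := by
          rw [hFl, Finset.mem_filter] at haF; exact haF.2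
        rcases hg_le a j (hamin j hjFl) with h | h
        · exact Or.inl h.symm
        · rw [NM_left hY haY]
          refine Or.inr ⟨?_, hj0⟩
          nlinarith [sub_pos.2 haY]
    · have hjFr : j ∈ Fr := by rw [hFr, Finset.mem_filter]; exact ⟨Finset.mem_univ _, hjl⟩
      obtain ⟨b, hbF, hbmax⟩ := argmax_exists Fr g ⟨j, hjFr⟩
      have hbS : b ∈ SR := by
        rw [hSR]; exact Finset.mem_filter.2 ⟨Finset.mem_univ _, hbF, hbmax⟩
      refine ⟨b, ?_, ?_⟩
      · rw [hS]
        exact Finset.mem_union_left _ (Finset.mem_union_right _ hbS)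
      · have hbY : Y (Fin.last m) < X b := by
          rw [hFr, Finset.mem_filter] at hbF; exact hbF.2
        rcases hg_le j b (hbmax j hjFr) with h | h
        · exact Or.inl h
        · rw [NM_right hY hbY]
          refine Or.inr ⟨hjl, ?_⟩
          nlinarith [sub_pos.2 hbY]
    · have hjT : j ∈ T i := by rw [hT]; simp only [Finset.mem_filter]; exact ⟨Finset.mem_univ _, hji⟩
      rcases lt_or_ge (X j) (M i) with hjM | hjM
      · have hjFA : j ∈ FA i := by
          rw [hFA]; simp only [Finset.mem_filter]; exact ⟨Finset.mem_univ _, hjT, hjM⟩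
        obtain ⟨a, haF, hamax⟩ := argmax_exists (FA i) g ⟨j, hjFA⟩
        have haS : a ∈ SA i := by
          rw [hSA]; exact Finset.mem_filter.2 ⟨Finset.mem_univ _, haF, hamax⟩
        refine ⟨a, ?_, ?_⟩
        · rw [hS]
          refine Finset.mem_union_right _ (Finset.mem_biUnion.2
            ⟨i, Finset.mem_univ _, Finset.mem_union_left _ haS⟩)
        · rw [hFA] at haF; simp only [Finset.mem_filter] at haF
          obtain ⟨_, haT, haM⟩ := haF
          rw [hT] at haT; simp only [Finset.mem_filter] at haT
          have haIoo : X a ∈ Ioo (Y i.castSucc) (Y i.succ) := haT.2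
          rcases hg_le j a (hamax j hjFA) with h | h
          · exact Or.inl h
          · rw [NM_mid hY i haIoo, if_pos haM]
            refine Or.inr ⟨hji.1, lt_min hji.2 ?_⟩
            nlinarith [sub_pos.2 haIoo.1]
      · have hjFB : j ∈ FB i := by
          rw [hFB]; simp only [Finset.mem_filter]; exact ⟨Finset.mem_univ _, hjT, hjM⟩
        obtain ⟨b, hbF, hbmin⟩ := argmin_exists (FB i) g ⟨j, hjFB⟩
        have hbS : b ∈ SB i := by
          rw [hSB]; exact Finset.mem_filter.2 ⟨Finset.mem_univ _, hbF, hbmin⟩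
        refine ⟨b, ?_, ?_⟩
        · rw [hS]
          refine Finset.mem_union_right _ (Finset.mem_biUnion.2
            ⟨i, Finset.mem_univ _, Finset.mem_union_right _ hbS⟩)
        · rw [hFB] at hbF; simp only [Finset.mem_filter] at hbF
          obtain ⟨_, hbT, hbM⟩ := hbF
          rw [hT] at hbT; simp only [Finset.mem_filter] at hbT
          have hbIoo : X b ∈ Ioo (Y i.castSucc) (Y i.succ) := hbT.2
          rcases hg_le b j (hbmin j hjFB) with h | h
          · exact Or.inl h.symm
          · rw [NM_mid hY i hbIoo, if_neg (not_lt.2 hbM)]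
            refine Or.inr ⟨max_lt hji.1 ?_, hji.2⟩
            nlinarith [sub_pos.2 hbIoo.2]
  -- cardinality bound for S
  have hsub : ∀ i, SA i ∪ SB i ⊆ T i := by
    intro i a ha
    rcases Finset.mem_union.1 ha with h | h
    · rw [hSA] at h; simp only [Finset.mem_filter] at h
      have := h.2.1; rw [hFA] at this; simp only [Finset.mem_filter] at this
      exact this.2.1
    · rw [hSB] at h; simp only [Finset.mem_filter] at h
      have := h.2.1; rw [hFB] at this; simp only [Finset.mem_filter] at this
      exact this.2.1
  have hcardmid : ∀ i, (SA i ∪ SB i).card ≤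
      (if 1 < cnt i then 2 else if cnt i = 1 then 1 else 0) := by
    intro i
    have h1 : (SA i ∪ SB i).card ≤ cnt i := by
      rw [hcnt]; exact Finset.card_le_card (hsub i)
    have hA1 : (SA i).card ≤ 1 := by
      rw [hSA]
      refine Finset.card_le_one.2 fun a ha b hb => ?_
      exact argmax_subsingleton hg_inj a b (Finset.mem_filter.1 ha).2 (Finset.mem_filter.1 hb).2
    have hB1 : (SB i).card ≤ 1 := by
      rw [hSB]
      refine Finset.card_le_one.2 fun a ha b hb => ?_
      exact argmin_subsingleton hg_inj a b (Finset.mem_filter.1 ha).2 (Finset.mem_filter.1 hb).2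
    have h2 : (SA i ∪ SB i).card ≤ (SA i).card + (SB i).card := Finset.card_union_le _ _
    split_ifs with ha hb <;> omega
  have hcardSL : SL.card ≤ if 0 < n₀ then 1 else 0 := by
    by_cases h : 0 < n₀
    · rw [if_pos h, hSL]
      refine Finset.card_le_one.2 fun a ha b hb => ?_
      exact argmin_subsingleton hg_inj a b (Finset.mem_filter.1 ha).2 (Finset.mem_filter.1 hb).2
    · rw [if_neg h]
      have hFle : Fl = ∅ := by
        rw [← Finset.card_eq_zero, ← hn₀]; omega
      have : SL = ∅ := by
        rw [hSL, hFle]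
        ext a; simp
      rw [this, Finset.card_empty]
  have hcardSR : SR.card ≤ if 0 < nm then 1 else 0 := by
    by_cases h : 0 < nm
    · rw [if_pos h, hSR]
      refine Finset.card_le_one.2 fun a ha b hb => ?_
      exact argmax_subsingleton hg_inj a b (Finset.mem_filter.1 ha).2 (Finset.mem_filter.1 hb).2
    · rw [if_neg h]
      have hFre : Fr = ∅ := by
        rw [← Finset.card_eq_zero, ← hnm]; omega
      have : SR = ∅ := by
        rw [hSR, hFre]
        ext a; simp
      rw [this, Finset.card_empty]
  have hsum2 : (∑ i : Fin m, if 1 < cnt i then 2 else if cnt i = 1 then 1 else 0)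
      = 2 * k₁ + k₂ := by
    have hpt : ∀ i ∈ Finset.univ, (if 1 < cnt i then 2 else if cnt i = 1 then 1 else 0)
        = 2 * (if 1 < cnt i then 1 else 0) + (if cnt i = 1 then 1 else 0) := by
      intro i _; split_ifs <;> omega
    rw [Finset.sum_congr rfl hpt, Finset.sum_add_distrib, ← Finset.mul_sum,
      ← Finset.card_filter, ← Finset.card_filter]
  have hupper : γ ≤ 2 * k₁ + k₂ + k₃ := by
    have hmemD : S.card ∈ {k | ∃ S : Finset (Fin n), S.card = k ∧
        ∀ j, ∃ i ∈ S, X j = X i ∨ X j ∈ NM Y r c (X i)} := ⟨S, rfl, hdom⟩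
    have h1 : γ ≤ S.card := by rw [hγdef]; exact Nat.sInf_le hmemD
    have h2 : S.card ≤ SL.card + SR.card
        + (Finset.univ.biUnion (fun i => SA i ∪ SB i)).card := by
      rw [hS]
      calc (SL ∪ SR ∪ Finset.univ.biUnion fun i => SA i ∪ SB i).card
          ≤ (SL ∪ SR).card + (Finset.univ.biUnion fun i => SA i ∪ SB i).card :=
            Finset.card_union_le _ _
        _ ≤ SL.card + SR.card + (Finset.univ.biUnion fun i => SA i ∪ SB i).card := by
            have := Finset.card_union_le SL SR; omega
    have h3 : (Finset.univ.biUnion (fun i => SA i ∪ SB i)).card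
        ≤ ∑ i : Fin m, (SA i ∪ SB i).card := Finset.card_biUnion_le
    have h4 : (∑ i : Fin m, (SA i ∪ SB i).card)
        ≤ ∑ i : Fin m, (if 1 < cnt i then 2 else if cnt i = 1 then 1 else 0) :=
      Finset.sum_le_sum fun i _ => hcardmid i
    have h5 : SL.card + SR.card ≤ k₃ := by
      rw [hk₃]; exact add_le_add hcardSL hcardSR
    omega
  -- third inequality
  have hthird : 2 * k₁ + k₂ + k₃ ≤ min n (2 * (m + 1)) := by
    refine le_min ?_ ?_
    · -- ≤ n
      have hTdisj : ∀ i ∈ (Finset.univ : Finset (Fin m)), ∀ i' ∈ Finset.univ, i ≠ i' →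
          Disjoint (T i) (T i') := by
        intro i _ i' _ hne
        rw [Finset.disjoint_left]
        intro a ha ha'
        rw [hT] at ha ha'; simp only [Finset.mem_filter] at ha ha'
        rcases lt_or_gt_of_ne hne with h | h
        · have : (i.succ : Fin (m+1)) ≤ i'.castSucc := by
            rw [Fin.le_def]; simp only [Fin.val_succ, Fin.coe_castSucc]
            exact Fin.lt_def.1 h
          exact absurd (lt_of_le_of_lt (le_trans ha.2.2.le (hYmono this)) ha'.2.1)
            (lt_irrefl _)
        · have : (i'.succ : Fin (m+1)) ≤ i.castSucc := by
            rw [Fin.le_def]; simp only [Fin.val_succ, Fin.coe_castSucc]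
            exact Fin.lt_def.1 h
          exact absurd (lt_of_le_of_lt (le_trans ha'.2.2.le (hYmono this)) ha.2.1)
            (lt_irrefl _)
      have hbUcard : (Finset.univ.biUnion T).card = ∑ i : Fin m, cnt i := by
        rw [Finset.card_biUnion hTdisj]
      have hdisjR : Disjoint Fr (Finset.univ.biUnion T) := by
        rw [Finset.disjoint_left]
        intro a ha hab
        rw [hFr, Finset.mem_filter] at ha
        obtain ⟨i, _, hai⟩ := Finset.mem_biUnion.1 hab
        rw [hT] at hai; simp only [Finset.mem_filter] at hai
        exact absurd ha.2 (not_lt.2 (le_trans hai.2.2.le (hYmono (Fin.le_last _))))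
      have hdisjL : Disjoint Fl (Fr ∪ Finset.univ.biUnion T) := by
        rw [Finset.disjoint_left]
        intro a ha hab
        rw [hFl, Finset.mem_filter] at ha
        rcases Finset.mem_union.1 hab with h | h
        · rw [hFr, Finset.mem_filter] at h
          exact absurd ha.2 (not_lt.2 (le_trans (hYmono (Fin.zero_le _)) h.2.le))
        · obtain ⟨i, _, hai⟩ := Finset.mem_biUnion.1 h
          rw [hT] at hai; simp only [Finset.mem_filter] at hai
          exact absurd ha.2 (not_lt.2 (le_trans (hYmono (Fin.zero_le _)) hai.2.1.le))
      have hcards : n₀ + nm + (∑ i : Fin m, cnt i) ≤ n := by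
        have h1 : (Fl ∪ (Fr ∪ Finset.univ.biUnion T)).card
            = Fl.card + (Fr.card + (Finset.univ.biUnion T).card) := by
          rw [Finset.card_union_of_disjoint hdisjL, Finset.card_union_of_disjoint hdisjR]
        have h2 : (Fl ∪ (Fr ∪ Finset.univ.biUnion T)).card ≤ n := by
          calc (Fl ∪ (Fr ∪ Finset.univ.biUnion T)).card
              ≤ (Finset.univ : Finset (Fin n)).card := Finset.card_le_card (Finset.subset_univ _)
            _ = n := by simp
        rw [hn₀, hnm, ← hbUcard]
        omega
      have h6 : 2 * k₁ + k₂ ≤ ∑ i : Fin m, cnt i := by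
        rw [← hsum2]
        refine Finset.sum_le_sum fun i _ => ?_
        split_ifs with ha hb <;> omega
      have h7 : k₃ ≤ n₀ + nm := by
        rw [hk₃]
        have : (if 0 < n₀ then 1 else 0) ≤ n₀ := by split_ifs <;> omega
        have : (if 0 < nm then 1 else 0) ≤ nm := by split_ifs <;> omega
        split_ifs <;> omega
      omega
    · -- ≤ 2(m+1)
      have hd : Disjoint (Finset.univ.filter fun i : Fin m => 1 < cnt i)
          (Finset.univ.filter fun i : Fin m => cnt i = 1) := by
        rw [Finset.disjoint_left]
        intro a ha hb
        simp only [Finset.mem_filter] at ha hb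
        omega
      have h8 : k₁ + k₂ ≤ m := by
        have := Finset.card_union_of_disjoint hd
        have h9 : ((Finset.univ.filter fun i : Fin m => 1 < cnt i)
            ∪ (Finset.univ.filter fun i : Fin m => cnt i = 1)).card
            ≤ (Finset.univ : Finset (Fin m)).card :=
          Finset.card_le_card (Finset.subset_univ _)
        simp only [Finset.card_univ, Fintype.card_fin] at h9
        show (Finset.univ.filter fun i : Fin m => 1 < cnt i).card
          + (Finset.univ.filter fun i : Fin m => cnt i = 1).card ≤ m
        omega
      have h10 : k₃ ≤ 2 := by
        rw [hk₃]; split_ifs <;> omega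
      omega
  exact ⟨hlow, hupper, hthird⟩
end

section
/- With the same intervalization of ℝ by Y₁ < ... < Yₘ and r = 1, c ∈ (0,1), the domination number of the PICD equals k₃ + k₄, where k₃ = #{i ∈ {0,m} : nᵢ > 0} and k₄ = Σ_{i=1}^{m-1} [1(some X point lies in (Yᵢ, Mᵢ)) + 1(some X point lies in (Mᵢ, Yᵢ₊₁))], with Mᵢ = Yᵢ + c(Yᵢ₊₁ - Yᵢ). -/
open Set
open scoped Classical

lemma nm_left {m : ℕ} {Y : Fin (m+1) → ℝ} (hY : StrictMono Y) {c x : ℝ}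
    (hx : x < Y 0) : NM Y 1 c x = Set.Ioo x (Y 0) := by
  have hr : x ∉ Set.range Y := by
    rintro ⟨k, rfl⟩
    exact absurd (hY.monotone (Fin.zero_le k)) (not_le.mpr hx)
  have hB : ¬ (Finset.univ.filter fun i => Y i < x).Nonempty := by
    simp only [Finset.filter_nonempty_iff, Finset.mem_univ, true_and, not_exists]
    exact fun k => not_lt.mpr (hx.le.trans (hY.monotone (Fin.zero_le k)))
  have hA : (Finset.univ.filter fun i => x < Y i).Nonempty :=
    ⟨0, by simp [hx]⟩
  have hinf : (Finset.univ.filter fun i => x < Y i).inf' hA Y = Y 0 := by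
    refine le_antisymm (Finset.inf'_le _ (by simp [hx])) ?_
    exact Finset.le_inf' _ _ fun k _ => hY.monotone (Fin.zero_le k)
  simp only [NM, if_neg hr, dif_neg hB, dif_pos hA, hinf, one_mul, sub_sub_cancel]

lemma nm_right {m : ℕ} {Y : Fin (m+1) → ℝ} (hY : StrictMono Y) {c x : ℝ}
    (hx : Y (Fin.last m) < x) : NM Y 1 c x = Set.Ioo (Y (Fin.last m)) x := by
  have hr : x ∉ Set.range Y := by
    rintro ⟨k, rfl⟩
    exact absurd (hY.monotone (Fin.le_last k)) (not_le.mpr hx)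
  have hB : (Finset.univ.filter fun i => Y i < x).Nonempty :=
    ⟨Fin.last m, by simp [hx]⟩
  have hA : ¬ (Finset.univ.filter fun i => x < Y i).Nonempty := by
    simp only [Finset.filter_nonempty_iff, Finset.mem_univ, true_and, not_exists]
    exact fun k => not_lt.mpr ((hY.monotone (Fin.le_last k)).trans hx.le)
  have hsup : (Finset.univ.filter fun i => Y i < x).sup' hB Y = Y (Fin.last m) := by
    refine le_antisymm ?_ (Finset.le_sup' _ (by simp [hx]))
    exact Finset.sup'_le _ _ fun k _ => hY.monotone (Fin.le_last k)
  simp only [NM, if_neg hr, dif_pos hB, dif_neg hA, hsup, one_mul, add_sub_cancel]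

lemma nm_mid {m : ℕ} {Y : Fin (m+1) → ℝ} (hY : StrictMono Y) {c x : ℝ}
    (hc : c ∈ Set.Ioo (0:ℝ) 1) {i : Fin m}
    (h1 : Y i.castSucc < x) (h2 : x < Y i.succ) :
    NM Y 1 c x = if x < Y i.castSucc + c * (Y i.succ - Y i.castSucc)
      then Set.Ioo (Y i.castSucc) x else Set.Ioo x (Y i.succ) := by
  have hr : x ∉ Set.range Y := by
    rintro ⟨k, rfl⟩
    rcases le_or_gt k i.castSucc with hk | hk
    · exact absurd (hY.monotone hk) (not_le.mpr h1)
    · exact absurd (hY.monotone (Fin.castSucc_lt_iff_succ_le.mp hk)) (not_le.mpr h2)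
  have hB : (Finset.univ.filter fun k => Y k < x).Nonempty :=
    ⟨i.castSucc, by simp [h1]⟩
  have hA : (Finset.univ.filter fun k => x < Y k).Nonempty :=
    ⟨i.succ, by simp [h2]⟩
  have hsup : (Finset.univ.filter fun k => Y k < x).sup' hB Y = Y i.castSucc := by
    refine le_antisymm ?_ (Finset.le_sup' _ (by simp [h1]))
    refine Finset.sup'_le _ _ fun k hk => ?_
    simp only [Finset.mem_filter] at hk
    have : Y k < Y i.succ := hk.2.trans h2
    exact hY.monotone (Fin.le_castSucc_iff.mpr (hY.lt_iff_lt.mp this))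
  have hinf : (Finset.univ.filter fun k => x < Y k).inf' hA Y = Y i.succ := by
    refine le_antisymm (Finset.inf'_le _ (by simp [h2])) ?_
    refine Finset.le_inf' _ _ fun k hk => ?_
    simp only [Finset.mem_filter] at hk
    have : Y i.castSucc < Y k := h1.trans hk.2
    exact hY.monotone ((Fin.castSucc_lt_iff_succ_le.mp (hY.lt_iff_lt.mp this)))
  have e1 : Y i.castSucc + 1 * (x - Y i.castSucc) = x := by ring
  have e2 : Y i.succ - 1 * (Y i.succ - x) = x := by ring
  simp only [NM, if_neg hr, dif_pos hB, dif_pos hA, hsup, hinf, e1, e2,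
    min_eq_right h2.le, max_eq_right h1.le]

/-- Cells of the intervalization: `inl false` = left end, `inl true` = right end,
`inr (i, false)` = left half of middle interval `i`, `inr (i, true)` = right half. -/
noncomputable def cellSet {m : ℕ} (Y : Fin (m+1) → ℝ) (c : ℝ) : Bool ⊕ Fin m × Bool → Set ℝ
  | Sum.inl false => Set.Iio (Y 0)
  | Sum.inl true => Set.Ioi (Y (Fin.last m))
  | Sum.inr (i, false) => Set.Ioo (Y i.castSucc) (Y i.castSucc + c * (Y i.succ - Y i.castSucc))
  | Sum.inr (i, true) => Set.Ioo (Y i.castSucc + c * (Y i.succ - Y i.castSucc)) (Y i.succ)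

lemma mid_lt {m : ℕ} {Y : Fin (m+1) → ℝ} (hY : StrictMono Y) {c : ℝ}
    (hc : c ∈ Set.Ioo (0:ℝ) 1) (i : Fin m) :
    Y i.castSucc < Y i.castSucc + c * (Y i.succ - Y i.castSucc) ∧
      Y i.castSucc + c * (Y i.succ - Y i.castSucc) < Y i.succ := by
  have h := hY (show i.castSucc < i.succ from Fin.castSucc_lt_succ)
  obtain ⟨hc0, hc1⟩ := hc
  constructor
  · nlinarith
  · nlinarith

lemma mem_cell_bounds {m : ℕ} {Y : Fin (m+1) → ℝ} (hY : StrictMono Y) {c x : ℝ}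
    (hc : c ∈ Set.Ioo (0:ℝ) 1) {i : Fin m} {b : Bool}
    (hx : x ∈ cellSet Y c (Sum.inr (i, b))) :
    Y i.castSucc < x ∧ x < Y i.succ := by
  obtain ⟨hl, hu⟩ := mid_lt hY hc i
  cases b <;> simp only [cellSet, Set.mem_Ioo] at hx
  · exact ⟨hx.1, hx.2.trans hu⟩
  · exact ⟨hl.trans hx.1, hx.2⟩

lemma cell_unique {m : ℕ} {Y : Fin (m+1) → ℝ} (hY : StrictMono Y) {c x : ℝ}
    (hc : c ∈ Set.Ioo (0:ℝ) 1) {C C' : Bool ⊕ Fin m × Bool}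
    (h : x ∈ cellSet Y c C) (h' : x ∈ cellSet Y c C') : C = C' := by
  -- helper for cross-middle contradiction
  have mid_ne : ∀ (i i' : Fin m), i < i' →
      Y i.castSucc < x → x < Y i.succ → Y i'.castSucc < x → x < Y i'.succ → False := by
    intro i i' hii h1 h2 h3 h4
    have : (i.succ : Fin (m+1)) ≤ i'.castSucc := by
      simp only [Fin.le_def, Fin.val_succ, Fin.coe_castSucc]
      exact hii
    have := hY.monotone this
    linarith
  have midmid : ∀ (i i' : Fin m), Y i.castSucc < x → x < Y i.succ →
      Y i'.castSucc < x → x < Y i'.succ → i = i' := by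
    intro i i' h1 h2 h3 h4
    rcases lt_trichotomy i i' with hlt | heq | hgt
    · exact absurd (mid_ne i i' hlt h1 h2 h3 h4) (by simp)
    · exact heq
    · exact absurd (mid_ne i' i hgt h3 h4 h1 h2) (by simp)
  rcases C with b | ⟨i, b⟩ <;> rcases C' with b' | ⟨i', b'⟩
  · cases b <;> cases b' <;> simp only [cellSet, Set.mem_Iio, Set.mem_Ioi] at h h'
    · rfl
    · exact absurd (h'.trans h) (not_lt.mpr (hY.monotone (Fin.zero_le _)))
    · exact absurd (h.trans h') (not_lt.mpr (hY.monotone (Fin.zero_le _)))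
    · rfl
  · exfalso
    obtain ⟨hb1, hb2⟩ := mem_cell_bounds hY hc h'
    cases b <;> simp only [cellSet, Set.mem_Iio, Set.mem_Ioi] at h
    · have := hY.monotone (Fin.zero_le i'.castSucc)
      linarith
    · have := hY.monotone (Fin.le_last i'.succ)
      linarith
  · exfalso
    obtain ⟨hb1, hb2⟩ := mem_cell_bounds hY hc h
    cases b' <;> simp only [cellSet, Set.mem_Iio, Set.mem_Ioi] at h'
    · have := hY.monotone (Fin.zero_le i.castSucc)
      linarith
    · have := hY.monotone (Fin.le_last i.succ)
      linarith
  · obtain ⟨ha1, ha2⟩ := mem_cell_bounds hY hc h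
    obtain ⟨hb1, hb2⟩ := mem_cell_bounds hY hc h'
    obtain rfl := midmid i i' ha1 ha2 hb1 hb2
    cases b <;> cases b' <;> simp only [cellSet, Set.mem_Ioo] at h h'
    · rfl
    · exfalso; linarith [h.2, h'.1]
    · exfalso; linarith [h.1, h'.2]
    · rfl

lemma cell_exists {m : ℕ} {Y : Fin (m+1) → ℝ} (hY : StrictMono Y) {c x : ℝ}
    (hc : c ∈ Set.Ioo (0:ℝ) 1)
    (hr : ∀ j, x ≠ Y j)
    (hM : ∀ i : Fin m, x ≠ Y i.castSucc + c * (Y i.succ - Y i.castSucc)) :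
    ∃ C, x ∈ cellSet Y c C := by
  by_cases h0 : x < Y 0
  · exact ⟨Sum.inl false, h0⟩
  by_cases hl : Y (Fin.last m) < x
  · exact ⟨Sum.inl true, hl⟩
  push_neg at h0 hl
  have h0' : Y 0 < x := lt_of_le_of_ne h0 (hr 0).symm
  have hl' : x < Y (Fin.last m) := lt_of_le_of_ne hl (hr _)
  -- largest k with Y k < x
  have hB : (Finset.univ.filter fun k => Y k < x).Nonempty := ⟨0, by simp [h0']⟩
  set k := (Finset.univ.filter fun k => Y k < x).max' hB with hk
  have hkx : Y k < x := by
    have := (Finset.univ.filter fun k => Y k < x).max'_mem hB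
    simpa using this
  have hklast : k ≠ Fin.last m := by
    intro hkl
    rw [hkl] at hkx
    linarith
  have hkv : (k : ℕ) < m := by
    rcases lt_or_eq_of_le (Nat.lt_succ_iff.mp k.isLt) with h | h
    · exact h
    · exact absurd (Fin.ext h) hklast
  set i : Fin m := ⟨(k : ℕ), hkv⟩ with hi
  have hcs : i.castSucc = k := rfl
  have hsucc : x < Y i.succ := by
    rcases lt_or_ge x (Y i.succ) with h | h
    · exact h
    have hmem : i.succ ∈ Finset.univ.filter fun k => Y k < x := by
      simp only [Finset.mem_filter, Finset.mem_univ, true_and]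
      exact lt_of_le_of_ne h (hr _).symm
    have := Finset.le_max' _ _ hmem
    rw [← hk] at this
    have : Y i.succ ≤ Y k := hY.monotone this
    have hk' : Y k < Y i.succ := hY (by rw [← hcs]; exact (show i.castSucc < i.succ from Fin.castSucc_lt_succ))
    linarith
  have h1 : Y i.castSucc < x := by rw [hcs]; exact hkx
  rcases lt_or_ge x (Y i.castSucc + c * (Y i.succ - Y i.castSucc)) with hm | hm
  · exact ⟨Sum.inr (i, false), ⟨h1, hm⟩⟩
  · exact ⟨Sum.inr (i, true), ⟨lt_of_le_of_ne hm (hM i).symm, hsucc⟩⟩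

lemma nm_subset_cell {m : ℕ} {Y : Fin (m+1) → ℝ} (hY : StrictMono Y) {c x : ℝ}
    (hc : c ∈ Set.Ioo (0:ℝ) 1) {C : Bool ⊕ Fin m × Bool}
    (hx : x ∈ cellSet Y c C) : NM Y 1 c x ⊆ cellSet Y c C := by
  rcases C with b | ⟨i, b⟩
  · cases b <;> simp only [cellSet, Set.mem_Iio, Set.mem_Ioi] at hx
    · rw [nm_left hY hx]
      exact fun y hy => hy.2
    · rw [nm_right hY hx]
      exact fun y hy => hy.1
  · obtain ⟨h1, h2⟩ := mem_cell_bounds hY hc hx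
    rw [nm_mid hY hc h1 h2]
    cases b <;> simp only [cellSet, Set.mem_Ioo] at hx ⊢
    · rw [if_pos hx.2]
      exact fun y hy => ⟨hy.1, hy.2.trans hx.2⟩
    · rw [if_neg (not_lt.mpr hx.1.le)]
      exact fun y hy => ⟨hx.1.trans hy.1, hy.2⟩

lemma cell_dominator {m n : ℕ} {Y : Fin (m+1) → ℝ} (hY : StrictMono Y) {c : ℝ}
    (hc : c ∈ Set.Ioo (0:ℝ) 1) (X : Fin n → ℝ) (C : Bool ⊕ Fin m × Bool)
    (hne : ∃ j, X j ∈ cellSet Y c C) :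
    ∃ i, X i ∈ cellSet Y c C ∧
      ∀ j, X j ∈ cellSet Y c C → X j = X i ∨ X j ∈ NM Y 1 c (X i) := by
  classical
  set F := Finset.univ.filter fun j => X j ∈ cellSet Y c C with hF
  have hFne : F.Nonempty := by
    obtain ⟨j, hj⟩ := hne
    exact ⟨j, by simp [hF, hj]⟩
  have hmemF : ∀ j, j ∈ F ↔ X j ∈ cellSet Y c C := fun j => by simp [hF]
  rcases C with b | ⟨i, b⟩
  · cases b
    · -- left end: minimum dominates
      obtain ⟨i₀, hi₀F, hmin⟩ := F.exists_min_image X hFne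
      have hi₀ : X i₀ ∈ cellSet Y c (Sum.inl false) := (hmemF i₀).mp hi₀F
      refine ⟨i₀, hi₀, fun j hj => ?_⟩
      rcases eq_or_ne (X j) (X i₀) with heq | hne'
      · exact Or.inl heq
      · refine Or.inr ?_
        rw [nm_left hY hi₀]
        exact ⟨lt_of_le_of_ne (hmin j ((hmemF j).mpr hj)) (Ne.symm hne'), hj⟩
    · -- right end: maximum dominates
      obtain ⟨i₀, hi₀F, hmax⟩ := F.exists_max_image X hFne
      have hi₀ : X i₀ ∈ cellSet Y c (Sum.inl true) := (hmemF i₀).mp hi₀F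
      refine ⟨i₀, hi₀, fun j hj => ?_⟩
      rcases eq_or_ne (X j) (X i₀) with heq | hne'
      · exact Or.inl heq
      · refine Or.inr ?_
        rw [nm_right hY hi₀]
        exact ⟨hj, lt_of_le_of_ne (hmax j ((hmemF j).mpr hj)) hne'⟩
  · cases b
    · -- left half of middle interval: maximum dominates
      obtain ⟨i₀, hi₀F, hmax⟩ := F.exists_max_image X hFne
      have hi₀ : X i₀ ∈ cellSet Y c (Sum.inr (i, false)) := (hmemF i₀).mp hi₀F
      obtain ⟨hb1, hb2⟩ := mem_cell_bounds hY hc hi₀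
      refine ⟨i₀, hi₀, fun j hj => ?_⟩
      rcases eq_or_ne (X j) (X i₀) with heq | hne'
      · exact Or.inl heq
      · refine Or.inr ?_
        rw [nm_mid hY hc hb1 hb2, if_pos hi₀.2]
        exact ⟨hj.1, lt_of_le_of_ne (hmax j ((hmemF j).mpr hj)) hne'⟩
    · -- right half of middle interval: minimum dominates
      obtain ⟨i₀, hi₀F, hmin⟩ := F.exists_min_image X hFne
      have hi₀ : X i₀ ∈ cellSet Y c (Sum.inr (i, true)) := (hmemF i₀).mp hi₀F
      obtain ⟨hb1, hb2⟩ := mem_cell_bounds hY hc hi₀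
      refine ⟨i₀, hi₀, fun j hj => ?_⟩
      rcases eq_or_ne (X j) (X i₀) with heq | hne'
      · exact Or.inl heq
      · refine Or.inr ?_
        rw [nm_mid hY hc hb1 hb2, if_neg (not_lt.mpr hi₀.1.le)]
        exact ⟨lt_of_le_of_ne (hmin j ((hmemF j).mpr hj)) (Ne.symm hne'), hj.2⟩

/-- For `r = 1` and `c ∈ (0,1)`, with the intervalization of `ℝ` by
`Y 0 < … < Y m` and `X` points avoiding the `Y` values and the centers
`Mᵢ = Yᵢ + c(Yᵢ₊₁ - Yᵢ)`, the domination number of the PICD equals `k₃ + k₄`, where `k₃`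
is the number of nonempty end intervals and `k₄` sums, over middle intervals, the
indicators that `(Yᵢ, Mᵢ)` resp. `(Mᵢ, Yᵢ₊₁)` contain a sample point. -/
theorem picd_domNum_multi_r_eq_one (m n : ℕ) (Y : Fin (m+1) → ℝ) (hY : StrictMono Y)
    (X : Fin n → ℝ) (hXY : ∀ i j, X i ≠ Y j) (c : ℝ) (hc : c ∈ Set.Ioo (0:ℝ) 1)
    (hXM : ∀ j (i : Fin m),
      X j ≠ Y i.castSucc + c * (Y i.succ - Y i.castSucc)) :
    let M : Fin m → ℝ := fun i => Y i.castSucc + c * (Y i.succ - Y i.castSucc)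
    let n₀ := (Finset.univ.filter fun j => X j < Y 0).card
    let nm := (Finset.univ.filter fun j => Y (Fin.last m) < X j).card
    let k₃ := (if 0 < n₀ then 1 else 0) + (if 0 < nm then 1 else 0)
    let k₄ := Finset.univ.sum fun i : Fin m =>
      (if ∃ j, X j ∈ Set.Ioo (Y i.castSucc) (M i) then 1 else 0) +
      (if ∃ j, X j ∈ Set.Ioo (M i) (Y i.succ) then 1 else 0)
    domNum n X (NM Y 1 c) = k₃ + k₄ := by
  show domNum n X (NM Y 1 c) =
    ((if 0 < (Finset.univ.filter fun j => X j < Y 0).card then 1 else 0) +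
     (if 0 < (Finset.univ.filter fun j => Y (Fin.last m) < X j).card then 1 else 0)) +
    (Finset.univ.sum fun i : Fin m =>
      (if ∃ j, X j ∈ Set.Ioo (Y i.castSucc) (Y i.castSucc + c * (Y i.succ - Y i.castSucc)) then 1 else 0) +
      (if ∃ j, X j ∈ Set.Ioo (Y i.castSucc + c * (Y i.succ - Y i.castSucc)) (Y i.succ) then 1 else 0))
  classical
  have hcell : ∀ j, ∃ C, X j ∈ cellSet Y c C :=
    fun j => cell_exists hY hc (fun k => hXY j k) (hXM j)
  set cellsF : Finset (Bool ⊕ Fin m × Bool) :=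
    Finset.univ.filter (fun C => ∃ j, X j ∈ cellSet Y c C) with hcellsF
  -- Step 1: cardinality of nonempty cells equals the RHS
  have hcard : cellsF.card =
      ((if 0 < (Finset.univ.filter fun j => X j < Y 0).card then 1 else 0) +
       (if 0 < (Finset.univ.filter fun j => Y (Fin.last m) < X j).card then 1 else 0)) +
      (Finset.univ.sum fun i : Fin m =>
        (if ∃ j, X j ∈ Set.Ioo (Y i.castSucc) (Y i.castSucc + c * (Y i.succ - Y i.castSucc)) then 1 else 0) +
        (if ∃ j, X j ∈ Set.Ioo (Y i.castSucc + c * (Y i.succ - Y i.castSucc)) (Y i.succ) then 1 else 0)) := by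
    have e0 : (∃ j, X j ∈ Set.Iio (Y 0)) ↔
        0 < (Finset.univ.filter fun j => X j < Y 0).card := by
      simp [Finset.card_pos, Finset.filter_nonempty_iff]
    have e1 : (∃ j, X j ∈ Set.Ioi (Y (Fin.last m))) ↔
        0 < (Finset.univ.filter fun j => Y (Fin.last m) < X j).card := by
      simp [Finset.card_pos, Finset.filter_nonempty_iff]
    have iteEq : ∀ {p q : Prop} {dp : Decidable p} {dq : Decidable q}, (p ↔ q) →
        (@ite ℕ p dp 1 0 = @ite ℕ q dq 1 0) := by
      intro p q dp dq h
      cases dp with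
      | isTrue h1 => rw [if_pos h1, if_pos (h.mp h1)]
      | isFalse h1 => rw [if_neg h1, if_neg (fun hq => h1 (h.mpr hq))]
    rw [hcellsF, Finset.card_filter, Fintype.sum_sum_type, Fintype.sum_bool,
      Fintype.sum_prod_type]
    simp only [Fintype.sum_bool, cellSet]
    congr 1
    · rw [add_comm]
      congr 1
      · exact iteEq e0
      · exact iteEq e1
    · refine Finset.sum_congr rfl fun i _ => ?_
      rw [add_comm]
      exact congrArg₂ (· + ·) (iteEq Iff.rfl) (iteEq Iff.rfl)
  -- handle n = 0
  rcases Nat.eq_zero_or_pos n with hn | hn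
  · subst hn
    have : cellsF = ∅ := by
      rw [hcellsF]
      simp [Finset.filter_eq_empty_iff]
    rw [← hcard, this, Finset.card_empty]
    rw [domNum]
    refine Nat.sInf_eq_zero.mpr (Or.inl ?_)
    exact ⟨∅, rfl, fun j => j.elim0⟩
  have : Inhabited (Fin n) := ⟨⟨0, hn⟩⟩
  -- Step 2: an optimal dominating set built from cell representatives
  have hrep : ∀ C, ∃ i : Fin n, (∃ j, X j ∈ cellSet Y c C) →
      (X i ∈ cellSet Y c C ∧
        ∀ j, X j ∈ cellSet Y c C → X j = X i ∨ X j ∈ NM Y 1 c (X i)) := by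
    intro C
    by_cases h : ∃ j, X j ∈ cellSet Y c C
    · obtain ⟨i, hi⟩ := cell_dominator hY hc X C h
      exact ⟨i, fun _ => hi⟩
    · exact ⟨default, fun h' => absurd h' h⟩
  choose rep hrep using hrep
  set S : Finset (Fin n) := cellsF.image rep with hS
  have hdomS : ∀ j, ∃ i ∈ S, X j = X i ∨ X j ∈ NM Y 1 c (X i) := by
    intro j
    obtain ⟨C, hC⟩ := hcell j
    have hCmem : C ∈ cellsF := by
      rw [hcellsF]; exact Finset.mem_filter.mpr ⟨Finset.mem_univ _, ⟨j, hC⟩⟩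
    exact ⟨rep C, Finset.mem_image_of_mem rep hCmem, (hrep C ⟨j, hC⟩).2 j hC⟩
  rw [domNum, ← hcard]
  apply le_antisymm
  · -- upper bound
    calc sInf {k | ∃ S : Finset (Fin n), S.card = k ∧
          ∀ j, ∃ i ∈ S, X j = X i ∨ X j ∈ NM Y 1 c (X i)} ≤ S.card :=
        csInf_le (OrderBot.bddBelow _) ⟨S, rfl, hdomS⟩
      _ ≤ cellsF.card := Finset.card_image_le
  · -- lower bound
    refine le_csInf ⟨S.card, S, rfl, hdomS⟩ ?_
    rintro k ⟨S', rfl, hdom'⟩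
    have hpick : ∀ C, ∃ i : Fin n, (∃ j, X j ∈ cellSet Y c C) →
        (i ∈ S' ∧ X i ∈ cellSet Y c C) := by
      intro C
      by_cases h : ∃ j, X j ∈ cellSet Y c C
      · obtain ⟨j, hj⟩ := h
        obtain ⟨i, hiS, hdm⟩ := hdom' j
        refine ⟨i, fun _ => ⟨hiS, ?_⟩⟩
        rcases hdm with heq | hmem
        · rwa [heq] at hj
        · obtain ⟨C', hC'⟩ := hcell i
          have h2 : X j ∈ cellSet Y c C' := nm_subset_cell hY hc hC' hmem
          have h3 : C' = C := cell_unique hY hc h2 hj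
          rwa [h3] at hC'
      · exact ⟨default, fun h' => absurd h' h⟩
    choose f hf using hpick
    refine Finset.card_le_card_of_injOn f (fun C hC => ?_) (fun C hC C' hC' heq => ?_)
    · exact (hf C (Finset.mem_filter.mp hC).2).1
    · have h1 := (hf C (Finset.mem_filter.mp hC).2).2
      have h2 := (hf C' (Finset.mem_filter.mp hC').2).2
      rw [heq] at h1
      exact cell_unique hY hc h1 h2
end
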